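/- Assume A_1 is invertible and that L̃ has finite entries (which holds unless P is stochastic and the asymptotic drift of X is zero). Define W(n) := (G^{−n} − ℙ(J_{τ^{−n}})) L̃ for n ∈ ℕ, so that W(0) = 0. Then W(n) is invertible for every n ≥ 1, and for all integers a ≥ 1 and b ≥ 1, the matrix ℙ(τ_a^+ < τ_{−b}^−, J_{τ_a^+}), whose (i,j)-entry is ℙ(τ_a^+ < τ_{−b}^−, J_{τ_a^+} = j | X_0 = 0, J_0 = i), satisfies ℙ(τ_a^+ < τ_{−b}^−, J_{τ_a^+}) = W(b) W(a+b)^{−1}. -/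

import Mathlib

/- Framework: a discrete-time, discrete-space upward skip-free Markov additive chain (MAC)
on ℤ × {1,…,N}, with one-step transition matrices `A m` (for a level increment of `m`), is
encoded combinatorially: the law of the chain started at a state `s` is determined by the
weights of its finite trajectories, so every probability/expectation appearing in the paper
can be written as a (countable) sum of trajectory weights. -/

attribute [local instance] Classical.propDecidable

noncomputable section

namespace MACPaper

/-- state space: level × phase -/
abbrev S (N : ℕ) := ℤ × Fin N

variable {N : ℕ}

/-- one-step transition weight -/
def step (A : ℤ → Matrix (Fin N) (Fin N) ℝ) (s t : S N) : ℝ :=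
  A (t.1 - s.1) s.2 t.2

/-- probability weight of a finite trajectory, given by the list of successive states after `s` -/
def wt (A : ℤ → Matrix (Fin N) (Fin N) ℝ) : S N → List (S N) → ℝ
  | _, [] => 1
  | s, t :: r => step A s t * wt A t r

/-- the trajectory (as a function of time) determined by start `s` and subsequent states `l` -/
def pos (s : S N) (l : List (S N)) : ℕ → S N
  | 0 => s
  | n + 1 => l.getD n s

/-- expectation of a path functional over trajectories of length `n` started at `s` -/
def expec (A : ℤ → Matrix (Fin N) (Fin N) ℝ) (s : S N) (n : ℕ)
    (f : (ℕ → S N) → ℝ) : ℝ :=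
  ∑' l : { l : List (S N) // l.length = n }, f (pos s l.1) * wt A s l.1

/-- probability of an event depending on the trajectory up to time `n` -/
def prob (A : ℤ → Matrix (Fin N) (Fin N) ℝ) (s : S N) (n : ℕ)
    (E : (ℕ → S N) → Prop) : ℝ :=
  expec A s n fun p => if E p then 1 else 0

/-- F(z) = Σ_{m=-1}^{∞} z^m A_{-m}   (entrywise) -/
def Fmat (A : ℤ → Matrix (Fin N) (Fin N) ℝ) (z : ℝ) : Matrix (Fin N) (Fin N) ℝ :=
  Matrix.of fun i j => ∑' m : ℤ, z ^ m * A (-m) i j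

/-- P = Σ_m A_m  (entrywise) -/
def Pmat (A : ℤ → Matrix (Fin N) (Fin N) ℝ) : Matrix (Fin N) (Fin N) ℝ :=
  Matrix.of fun i j => ∑' m : ℤ, A m i j

/-- `τ^{x} = n`: the chain first hits level `x` at time `n` -/
def hitsAt (x : ℤ) (n : ℕ) (p : ℕ → S N) : Prop :=
  (p n).1 = x ∧ ∀ k < n, (p k).1 ≠ x

/-- matrix 𝔼(v^{τ^{x}}; τ^{x} < ∞, J_{τ^{x}}), chain started at (0,·) -/
def hitMat (A : ℤ → Matrix (Fin N) (Fin N) ℝ) (v : ℝ) (x : ℤ) :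
    Matrix (Fin N) (Fin N) ℝ :=
  Matrix.of fun i j =>
    ∑' n : ℕ, v ^ n * prob A ((0 : ℤ), i) n fun p => hitsAt x n p ∧ (p n).2 = j

/-- v-discounted occupation mass matrix at level `x` (infinite horizon), chain started at (0,·) -/
def occMat (A : ℤ → Matrix (Fin N) (Fin N) ℝ) (v : ℝ) (x : ℤ) :
    Matrix (Fin N) (Fin N) ℝ :=
  Matrix.of fun i j =>
    ∑' k : ℕ, v ^ k * prob A ((0 : ℤ), i) k fun p => p k = (x, j)

/-- v-discounted occupation mass at level 0 up to the first hitting time of level `n` -/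
def occUpToMat (A : ℤ → Matrix (Fin N) (Fin N) ℝ) (v : ℝ) (n : ℤ) :
    Matrix (Fin N) (Fin N) ℝ :=
  Matrix.of fun i j =>
    ∑' k : ℕ, v ^ k * prob A ((0 : ℤ), i) k fun p =>
      p k = ((0 : ℤ), j) ∧ ∀ m < k, (p m).1 ≠ n

/-- the fundamental matrix G = ℙ(J_{τ^{1}}) -/
def Gmat (A : ℤ → Matrix (Fin N) (Fin N) ℝ) : Matrix (Fin N) (Fin N) ℝ :=
  hitMat A 1 1

/-- L̃ : occupation mass matrix at level 0, infinite horizon -/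
def Ltilde (A : ℤ → Matrix (Fin N) (Fin N) ℝ) : Matrix (Fin N) (Fin N) ℝ :=
  occMat A 1 0

/-- the first scale matrix W(n) = (G^{-n} - ℙ(J_{τ^{-n}})) L̃ -/
def Wmat (A : ℤ → Matrix (Fin N) (Fin N) ℝ) (n : ℕ) : Matrix (Fin N) (Fin N) ℝ :=
  ((Gmat A)⁻¹ ^ n - hitMat A 1 (-(n : ℤ))) * Ltilde A

/-- v-discounted first scale matrix W_v(n) = (G_v^{-n} - 𝔼(v^{τ^{-n}}; J_{τ^{-n}})) L̃_v -/
def WmatV (A : ℤ → Matrix (Fin N) (Fin N) ℝ) (v : ℝ) (n : ℕ) :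
    Matrix (Fin N) (Fin N) ℝ :=
  ((hitMat A v 1)⁻¹ ^ n - hitMat A v (-(n : ℤ))) * occMat A v 0

/-- the second scale matrix Z(z,n) = z^{-n}[I + Σ_{k=0}^{n} z^k W(k) (I - F(z))] -/
def Zmat (A : ℤ → Matrix (Fin N) (Fin N) ℝ) (z : ℝ) (n : ℕ) :
    Matrix (Fin N) (Fin N) ℝ :=
  z⁻¹ ^ n • (1 + (∑ k ∈ Finset.range (n + 1), z ^ k • Wmat A k) * (1 - Fmat A z))

/-- matrix 𝔼(v^{τ_a^+}; τ_a^+ < τ_{-b}^-, J_{τ_a^+}) (upward exit from the strip [-b,a]) -/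
def upExitMat (A : ℤ → Matrix (Fin N) (Fin N) ℝ) (v : ℝ) (a b : ℤ) :
    Matrix (Fin N) (Fin N) ℝ :=
  Matrix.of fun i j =>
    ∑' n : ℕ, v ^ n * prob A ((0 : ℤ), i) n fun p =>
      a ≤ (p n).1 ∧ (∀ k < n, -b < (p k).1 ∧ (p k).1 < a) ∧ (p n).2 = j

/-- matrix 𝔼(z^{-X_{τ_{-b}^-}}; τ_{-b}^- < τ_a^+, J_{τ_{-b}^-}) (downward exit from [-b,a]) -/
def downExitMat (A : ℤ → Matrix (Fin N) (Fin N) ℝ) (z : ℝ) (a b : ℤ) :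
    Matrix (Fin N) (Fin N) ℝ :=
  Matrix.of fun i j =>
    ∑' n : ℕ, expec A ((0 : ℤ), i) n fun p =>
      if (p n).1 ≤ -b ∧ (∀ k < n, -b < (p k).1 ∧ (p k).1 < a) ∧ (p n).2 = j
      then z ^ (-(p n).1) else 0

/-- matrix 𝔼(z^{-X_{τ_{-b}^-}}; τ_{-b}^- < ∞, J_{τ_{-b}^-}) (one-sided downward exit) -/
def oneDownMat (A : ℤ → Matrix (Fin N) (Fin N) ℝ) (z : ℝ) (b : ℤ) :
    Matrix (Fin N) (Fin N) ℝ :=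
  Matrix.of fun i j =>
    ∑' n : ℕ, expec A ((0 : ℤ), i) n fun p =>
      if (p n).1 ≤ -b ∧ (∀ k < n, -b < (p k).1) ∧ (p n).2 = j
      then z ^ (-(p n).1) else 0

/-- two-sided Skorokhod reflection of the level path `X` in [-d,0], started at `x`:
the regulated process H -/
def reflH (d : ℕ) (x : ℤ) (X : ℕ → ℤ) : ℕ → ℤ
  | 0 => x
  | n + 1 =>
      reflH d x X n + (X (n + 1) - X n)
        - max (reflH d x X n + (X (n + 1) - X n)) 0
        + max (-(d : ℤ) - (reflH d x X n + (X (n + 1) - X n))) 0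

/-- upper regulator R^+ of the two-sided reflection in [-d,0] -/
def reflRp (d : ℕ) (x : ℤ) (X : ℕ → ℤ) : ℕ → ℤ
  | 0 => 0
  | n + 1 => reflRp d x X n + max (reflH d x X n + (X (n + 1) - X n)) 0

/-- lower regulator R^- of the two-sided reflection in [-d,0] -/
def reflRm (d : ℕ) (x : ℤ) (X : ℕ → ℤ) : ℕ → ℤ
  | 0 => 0
  | n + 1 => reflRm d x X n + max (-(d : ℤ) - (reflH d x X n + (X (n + 1) - X n))) 0

/-- lower regulator of the one-sided reflection at -b : R^{-b}_n = -b - min(-b, min_{k≤n} X_k) -/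
def lowReg (b : ℤ) (X : ℕ → ℤ) (n : ℕ) : ℤ :=
  -b - min (-b) ((Finset.range (n + 1)).inf' ⟨0, Finset.mem_range.mpr (Nat.succ_pos n)⟩ X)

/-! ### Infrastructure for the proof -/

section ProofInfra

open scoped ENNReal

variable (A : ℤ → Matrix (Fin N) (Fin N) ℝ)

/-- ENNReal one-step weight -/
def estep (s t : S N) : ℝ≥0∞ := ENNReal.ofReal (step A s t)

/-- ENNReal trajectory weight -/
def ewt : S N → List (S N) → ℝ≥0∞
  | _, [] => 1
  | s, t :: r => estep A s t * ewt t r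

/-- end state of a trajectory -/
def endSt : S N → List (S N) → S N
  | s, [] => s
  | _, t :: r => endSt t r

variable {A}

@[simp] lemma ewt_nil (s : S N) : ewt A s [] = 1 := rfl

@[simp] lemma ewt_cons (s t : S N) (r : List (S N)) :
    ewt A s (t :: r) = estep A s t * ewt A t r := rfl

@[simp] lemma endSt_nil (s : S N) : endSt s ([] : List (S N)) = s := rfl

@[simp] lemma endSt_cons (s t : S N) (r : List (S N)) :
    endSt s (t :: r) = endSt t r := rfl

lemma ewt_ne_top (s : S N) (l : List (S N)) : ewt A s l ≠ ∞ := by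
  induction l generalizing s with
  | nil => simp
  | cons t r ih => simp only [ewt_cons]; exact ENNReal.mul_ne_top ENNReal.ofReal_ne_top (ih t)

lemma ewt_toReal (hA : ∀ m i j, 0 ≤ A m i j) (s : S N) (l : List (S N)) :
    (ewt A s l).toReal = wt A s l := by
  induction l generalizing s with
  | nil => simp [wt]
  | cons t r ih =>
      simp only [ewt_cons, wt, ENNReal.toReal_mul, ih t, estep]
      rw [ENNReal.toReal_ofReal]
      exact hA _ _ _

lemma ewt_append (s : S N) (l₁ l₂ : List (S N)) :
    ewt A s (l₁ ++ l₂) = ewt A s l₁ * ewt A (endSt s l₁) l₂ := by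
  induction l₁ generalizing s with
  | nil => simp
  | cons t r ih => simp [ih t, mul_assoc]

lemma endSt_append (s : S N) (l₁ l₂ : List (S N)) :
    endSt s (l₁ ++ l₂) = endSt (endSt s l₁) l₂ := by
  induction l₁ generalizing s with
  | nil => simp
  | cons t r ih => simp [ih t]

/- navigation lemmas for `pos` -/

@[simp] lemma pos_zero (s : S N) (l : List (S N)) : pos s l 0 = s := rfl

lemma pos_succ (s : S N) (l : List (S N)) (k : ℕ) : pos s l (k + 1) = l.getD k s := rfl

lemma getD_indep {α : Type*} {l : List α} {k : ℕ} (h : k < l.length) (d d' : α) :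
    l.getD k d = l.getD k d' := by
  rw [List.getD_eq_getElem?_getD, List.getD_eq_getElem?_getD, List.getElem?_eq_getElem h]
  rfl

lemma pos_cons {s t : S N} {r : List (S N)} {k : ℕ} (h : k ≤ r.length) :
    pos s (t :: r) (k + 1) = pos t r k := by
  cases k with
  | zero => simp [pos_succ]
  | succ k =>
      rw [pos_succ, List.getD_cons_succ, pos_succ]
      exact getD_indep (by omega) _ _

lemma pos_endSt (s : S N) (l : List (S N)) : pos s l l.length = endSt s l := by
  induction l generalizing s with
  | nil => rfl
  | cons t r ih => rw [List.length_cons, pos_cons le_rfl, ih t, endSt_cons]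

lemma pos_append_left {s : S N} {l₁ l₂ : List (S N)} {k : ℕ} (h : k ≤ l₁.length) :
    pos s (l₁ ++ l₂) k = pos s l₁ k := by
  induction l₁ generalizing s k with
  | nil => simp at h; subst h; rfl
  | cons t r ih =>
      cases k with
      | zero => rfl
      | succ k =>
          have hk : k ≤ r.length := by simp at h; omega
          rw [List.cons_append, pos_cons (by simp; omega), pos_cons hk]
          exact ih hk

lemma pos_append_right {s : S N} {l₁ l₂ : List (S N)} {k : ℕ} (h : k ≤ l₂.length) :
    pos s (l₁ ++ l₂) (l₁.length + k) = pos (endSt s l₁) l₂ k := by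
  induction l₁ generalizing s with
  | nil => simp
  | cons t r ih =>
      rw [List.cons_append, List.length_cons, show r.length + 1 + k = (r.length + k) + 1 by omega,
        pos_cons (by simp; omega), ih, endSt_cons]

lemma pos_take {s : S N} {l : List (S N)} {k m : ℕ} (hm : m ≤ k) (hk : k ≤ l.length) :
    pos s (l.take k) m = pos s l m := by
  conv_rhs => rw [← List.take_append_drop k l]
  rw [pos_append_left (by simp; omega)]

lemma endSt_take {s : S N} {l : List (S N)} {k : ℕ} (hk : k ≤ l.length) :
    endSt s (l.take k) = pos s l k := by
  rw [← pos_endSt, List.length_take, min_eq_left hk, pos_take le_rfl hk]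

lemma pos_drop {s : S N} {l : List (S N)} {k m : ℕ} (hk : k ≤ l.length) :
    pos (pos s l k) (l.drop k) m = pos s l (k + m) ∨ m > (l.drop k).length := by
  by_cases hm : m ≤ (l.drop k).length
  · left
    conv_rhs => rw [← List.take_append_drop k l]
    rw [show k + m = (l.take k).length + m by simp; omega, pos_append_right hm, endSt_take hk]
  · right; omega

lemma pos_drop' {s : S N} {l : List (S N)} {k m : ℕ} (hk : k ≤ l.length)
    (hm : m ≤ (l.drop k).length) :
    pos (pos s l k) (l.drop k) m = pos s l (k + m) := by
  rcases pos_drop (s := s) (l := l) (k := k) (m := m) hk with h | h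
  · exact h
  · omega

lemma endSt_drop {s : S N} {l : List (S N)} {k : ℕ} (hk : k ≤ l.length) :
    endSt (pos s l k) (l.drop k) = endSt s l := by
  rw [← pos_endSt, pos_drop' hk le_rfl, List.length_drop, ← pos_endSt]
  congr 1
  omega

lemma ewt_take_drop {s : S N} {l : List (S N)} {k : ℕ} (hk : k ≤ l.length) :
    ewt A s l = ewt A s (l.take k) * ewt A (pos s l k) (l.drop k) := by
  conv_lhs => rw [← List.take_append_drop k l]
  rw [ewt_append, endSt_take hk]

/-- on a trajectory of nonzero weight, all level increments are at most 1 -/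
lemma incr_le_one (hskip : ∀ m : ℤ, 2 ≤ m → A m = 0) {s : S N} {l : List (S N)}
    (hw : ewt A s l ≠ 0) : ∀ k < l.length, (pos s l (k + 1)).1 ≤ (pos s l k).1 + 1 := by
  induction l generalizing s with
  | nil => intro k hk; simp at hk
  | cons t r ih =>
      simp only [ewt_cons, mul_ne_zero_iff] at hw
      intro k hk
      cases k with
      | zero =>
          simp only [pos_cons (Nat.zero_le _), pos_zero]
          by_contra hlt
          have h2 : (2:ℤ) ≤ t.1 - s.1 := by omega
          have := hw.1
          rw [estep, step, hskip _ h2] at this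
          simp at this
      | succ k =>
          have hk' : k + 1 ≤ r.length := by simpa using Nat.lt_of_succ_lt_succ (by simpa using hk)
          rw [pos_cons (by omega), pos_cons (by omega)]
          exact ih hw.2 k (by simpa [List.length_cons] using hk)

/-- discrete intermediate value theorem: first hitting of a level from below -/
lemma first_hit {p : ℕ → ℤ} {n : ℕ} {c : ℤ} (hstep : ∀ k < n, p (k + 1) ≤ p k + 1)
    (h0 : p 0 < c) (hn : c ≤ p n) :
    ∃ k, 0 < k ∧ k ≤ n ∧ p k = c ∧ ∀ m < k, p m < c := by
  classical
  have hex : ∃ m, m ≤ n ∧ c ≤ p m := ⟨n, le_rfl, hn⟩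
  obtain ⟨k, ⟨hkn, hkc⟩, hmin⟩ := Nat.findX hex
  have hpos : 0 < k := by
    rcases Nat.eq_zero_or_pos k with h | h
    · rw [h] at hkc; omega
    · exact h
  refine ⟨k, hpos, hkn, ?_, ?_⟩
  · obtain ⟨k', rfl⟩ : ∃ k', k = k' + 1 := ⟨k - 1, by omega⟩
    have hlt : p k' < c := by
      by_contra h
      exact hmin k' (by omega) ⟨by omega, by omega⟩
    have := hstep k' (by omega)
    omega
  · intro m hm
    by_contra h
    exact hmin m hm ⟨by omega, by omega⟩

/-! ### the path-sum functional `T` -/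

variable (A) in
/-- total weight of the set of trajectories satisfying `E`, started at `s` -/
def T (s : S N) (E : List (S N) → Prop) : ℝ≥0∞ :=
  ∑' l : List (S N), if E l then ewt A s l else 0

lemma T_congr {s : S N} {E E' : List (S N) → Prop}
    (h : ∀ l, ewt A s l ≠ 0 → (E l ↔ E' l)) : T A s E = T A s E' := by
  refine tsum_congr fun l => ?_
  by_cases hw : ewt A s l = 0
  · split_ifs <;> simp [hw]
  · simp only [h l hw]

lemma T_mono {s : S N} {E E' : List (S N) → Prop} (h : ∀ l, E l → E' l) :
    T A s E ≤ T A s E' := by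
  refine ENNReal.tsum_le_tsum fun l => ?_
  split_ifs with h1 h2
  · exact le_rfl
  · exact absurd (h l h1) h2
  · exact zero_le
  · exact le_rfl

lemma T_zero {s : S N} {E : List (S N) → Prop} (h : ∀ l, E l → ewt A s l = 0) :
    T A s E = 0 := by
  refine ENNReal.tsum_eq_zero.2 fun l => ?_
  split_ifs with h1
  · exact h l h1
  · rfl

/-- splitting a sum over lists into nil and cons parts -/
lemma tsum_list {α : Type*} (f : List α → ℝ≥0∞) :
    ∑' l : List α, f l = f [] + ∑' p : α × List α, f (p.1 :: p.2) := by
  have h1 : ∀ l : List α, f l = (if l = [] then f l else 0) + (if l = [] then 0 else f l) := by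
    intro l; split_ifs <;> simp
  rw [tsum_congr h1, ENNReal.tsum_add]
  congr 1
  · rw [tsum_eq_single ([] : List α) (by intro l h; simp [h])]
    simp
  · refine tsum_eq_tsum_of_ne_zero_bij
      (f := fun l : List α => if l = [] then 0 else f l)
      (g := fun p : α × List α => f (p.1 :: p.2))
      (fun p => p.1.1 :: p.1.2) ?_ ?_ ?_
    · rintro ⟨⟨a, r⟩, hp⟩ ⟨⟨b, t⟩, hq⟩ h
      exact Subtype.ext (by simpa [Prod.ext_iff] using h)
    · intro l hl
      simp only [Function.mem_support, ne_eq] at hl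
      cases l with
      | nil => simp at hl
      | cons a r =>
          have hf : f (a :: r) ≠ 0 := by simpa using hl
          exact ⟨⟨(a, r), hf⟩, rfl⟩
    · intro p
      simp
/-! ### substochasticity bounds -/

lemma estep_rowsum (hA : ∀ m i j, 0 ≤ A m i j)
    (hsum : ∀ i, Summable fun q : ℤ × Fin N => A q.1 i q.2)
    (hsub : ∀ i, ∑' q : ℤ × Fin N, A q.1 i q.2 ≤ 1) (s : S N) :
    ∑' t : S N, estep A s t ≤ 1 := by
  have h1 : ∑' t : S N, estep A s t
      = ∑' q : ℤ × Fin N, ENNReal.ofReal (A q.1 s.2 q.2) := by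
    rw [ENNReal.tsum_prod', ENNReal.tsum_prod',
      ← Equiv.tsum_eq (Equiv.subRight s.1)
        (fun y => ∑' j : Fin N, ENNReal.ofReal (A y s.2 j))]
    refine tsum_congr fun y => tsum_congr fun j => ?_
    simp [estep, step, Equiv.subRight]
  rw [h1, ← ENNReal.ofReal_tsum_of_nonneg (fun q => hA _ _ _) (hsum s.2)]
  calc ENNReal.ofReal (∑' q : ℤ × Fin N, A q.1 s.2 q.2)
      ≤ ENNReal.ofReal 1 := ENNReal.ofReal_le_ofReal (hsub s.2)
    _ = 1 := ENNReal.ofReal_one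

variable (A) in
/-- length-bounded version of `T` -/
def Tbd (n : ℕ) (s : S N) (E : List (S N) → Prop) : ℝ≥0∞ :=
  ∑' l : List (S N), if E l ∧ l.length ≤ n then ewt A s l else 0

lemma Tbd_le_one (hA : ∀ m i j, 0 ≤ A m i j)
    (hsum : ∀ i, Summable fun q : ℤ × Fin N => A q.1 i q.2)
    (hsub : ∀ i, ∑' q : ℤ × Fin N, A q.1 i q.2 ≤ 1) :
    ∀ (n : ℕ) (s : S N) (E : List (S N) → Prop),
      (∀ l l', E l → E (l ++ l') → l' = []) → Tbd A n s E ≤ 1 := by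
  intro n
  induction n with
  | zero =>
      intro s E _
      rw [Tbd, tsum_list]
      have h2 : ∑' p : S N × List (S N),
          (if E (p.1 :: p.2) ∧ (p.1 :: p.2).length ≤ 0 then ewt A s (p.1 :: p.2) else 0) = 0 :=
        ENNReal.tsum_eq_zero.2 fun p => by simp
      rw [h2, add_zero]
      split_ifs <;> simp
  | succ n ih =>
      intro s E hpf
      by_cases hnil : E []
      · calc Tbd A (n+1) s E ≤ ∑' l : List (S N), if l = [] then 1 else 0 := by
              refine ENNReal.tsum_le_tsum fun l => ?_
              by_cases h1 : E l ∧ l.length ≤ n + 1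
              · have hl : l = [] := by
                  have := hpf [] l hnil (by simpa using h1.1)
                  simpa using this
                subst hl
                rw [if_pos h1]
                simp
              · simp only [h1, if_false]
                exact zero_le
          _ = 1 := by
              rw [tsum_eq_single ([] : List (S N)) (by intro b hb; simp [hb])]
              simp
      · rw [Tbd, tsum_list]
        have hnil0 : (if E [] ∧ ([] : List (S N)).length ≤ n + 1 then ewt A s [] else 0) = 0 := by
          simp [hnil]
        rw [hnil0, zero_add]
        have hpt : ∀ p : S N × List (S N),
            (if E (p.1 :: p.2) ∧ (p.1 :: p.2).length ≤ n + 1 then ewt A s (p.1 :: p.2) else 0)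
            = estep A s p.1 * (if E (p.1 :: p.2) ∧ p.2.length ≤ n then ewt A p.1 p.2 else 0) := by
          intro p
          have hlen : (p.1 :: p.2).length ≤ n + 1 ↔ p.2.length ≤ n := by simp
          by_cases h1 : E (p.1 :: p.2) ∧ p.2.length ≤ n
          · rw [if_pos ⟨h1.1, hlen.2 h1.2⟩, if_pos h1, ewt_cons]
          · rw [if_neg (by rw [hlen]; exact h1), if_neg h1, mul_zero]
        rw [tsum_congr hpt, ENNReal.tsum_prod']
        refine le_trans (ENNReal.tsum_le_tsum fun t => ?_)
          (by simpa using estep_rowsum hA hsum hsub s)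
        show ∑' r : List (S N),
            estep A s t * (if E (t :: r) ∧ r.length ≤ n then ewt A t r else 0)
          ≤ estep A s t
        rw [ENNReal.tsum_mul_left]
        refine le_trans (mul_le_mul_right
          (ih t _ (fun l l' h1 h2 => hpf (t :: l) l' h1 (by simpa using h2))) _)
          (le_of_eq (mul_one _))

lemma T_le_one (hA : ∀ m i j, 0 ≤ A m i j)
    (hsum : ∀ i, Summable fun q : ℤ × Fin N => A q.1 i q.2)
    (hsub : ∀ i, ∑' q : ℤ × Fin N, A q.1 i q.2 ≤ 1) {s : S N} {E : List (S N) → Prop}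
    (hpf : ∀ l l', E l → E (l ++ l') → l' = []) :
    T A s E ≤ 1 := by
  rw [T, ENNReal.tsum_eq_iSup_sum]
  refine iSup_le fun F => ?_
  set n := F.sup List.length with hn
  calc ∑ l ∈ F, (if E l then ewt A s l else 0)
      ≤ ∑ l ∈ F, (if E l ∧ l.length ≤ n then ewt A s l else 0) := by
        refine Finset.sum_le_sum fun l hl => ?_
        have hle : l.length ≤ n := Finset.le_sup hl
        by_cases h1 : E l
        · rw [if_pos h1, if_pos ⟨h1, hle⟩]
        · rw [if_neg h1, if_neg (by tauto)]
    _ ≤ Tbd A n s E := ENNReal.sum_le_tsum F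
    _ ≤ 1 := Tbd_le_one hA hsum hsub n s E hpf

lemma T_ne_top (hA : ∀ m i j, 0 ≤ A m i j)
    (hsum : ∀ i, Summable fun q : ℤ × Fin N => A q.1 i q.2)
    (hsub : ∀ i, ∑' q : ℤ × Fin N, A q.1 i q.2 ≤ 1) {s : S N} {E : List (S N) → Prop}
    (hpf : ∀ l l', E l → E (l ++ l') → l' = []) :
    T A s E ≠ ∞ := by
  intro h
  have h2 := T_le_one hA hsum hsub (s := s) hpf
  rw [h] at h2
  exact absurd h2 (by simp)

/-! ### bridges between `prob` and `T` -/

lemma prob_eq_T (hA : ∀ m i j, 0 ≤ A m i j) {s : S N} {n : ℕ} {Ev : (ℕ → S N) → Prop} :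
    prob A s n Ev
      = (∑' l : List (S N), if Ev (pos s l) ∧ l.length = n then ewt A s l else 0).toReal := by
  rw [prob, expec]
  have h1 : ∀ l : {l : List (S N) // l.length = n},
      (if Ev (pos s l.1) then (1:ℝ) else 0) * wt A s l.1
        = ((fun l' : List (S N) =>
            if Ev (pos s l') ∧ l'.length = n then ewt A s l' else 0) l.1).toReal := by
    rintro ⟨l, hl⟩
    by_cases h : Ev (pos s l) <;>
      simp [h, hl, ewt_toReal hA]
  rw [tsum_congr h1,
    ← ENNReal.tsum_toReal_eq (fun l => by dsimp only; split_ifs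
                                          exacts [ewt_ne_top _ _, ENNReal.zero_ne_top])]
  congr 1
  refine (tsum_subtype {l : List (S N) | l.length = n}
    (fun l' => if Ev (pos s l') ∧ l'.length = n then ewt A s l' else 0)).trans ?_
  refine tsum_congr fun l => ?_
  rw [Set.indicator_apply]
  by_cases h1 : l.length = n
  · rw [if_pos (by exact h1)]
  · rw [if_neg (by exact h1), if_neg (by tauto)]

lemma tsum_prob_eq_T (hA : ∀ m i j, 0 ≤ A m i j)
    (hsum : ∀ i, Summable fun q : ℤ × Fin N => A q.1 i q.2)
    (hsub : ∀ i, ∑' q : ℤ × Fin N, A q.1 i q.2 ≤ 1)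
    {s : S N} (Efam : ℕ → (ℕ → S N) → Prop) :
    ∑' n : ℕ, prob A s n (Efam n)
      = (T A s fun l => Efam l.length (pos s l)).toReal := by
  have h1 : ∀ n, prob A s n (Efam n)
      = ((fun m => ∑' l : List (S N),
          if Efam m (pos s l) ∧ l.length = m then ewt A s l else 0) n).toReal :=
    fun n => prob_eq_T hA
  have hfin : ∀ n, (∑' l : List (S N),
      if Efam n (pos s l) ∧ l.length = n then ewt A s l else 0) ≠ ∞ := by
    intro n
    have hpf : ∀ l l' : List (S N), l.length = n → (l ++ l').length = n → l' = [] := by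
      intro l l' h1' h2'
      rw [List.length_append] at h2'
      exact List.length_eq_zero_iff.1 (by omega)
    refine ne_top_of_le_ne_top
      (T_ne_top hA hsum hsub (s := s) (E := fun l => l.length = n) hpf) ?_
    rw [T]
    refine ENNReal.tsum_le_tsum fun l => ?_
    by_cases h : Efam n (pos s l) ∧ l.length = n
    · rw [if_pos h, if_pos h.2]
    · rw [if_neg h]
      exact zero_le
  rw [tsum_congr h1, ← ENNReal.tsum_toReal_eq hfin]
  congr 1
  rw [T, ENNReal.tsum_comm]
  refine tsum_congr fun l => ?_
  rw [tsum_eq_single l.length (by intro n hn; rw [if_neg (by tauto)])]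
  by_cases h : Efam l.length (pos s l)
  · rw [if_pos ⟨h, rfl⟩, if_pos h]
  · rw [if_neg (by tauto), if_neg h]


/-! ### level translation invariance -/

/-- shift all levels by `c` -/
def lshift (c : ℤ) (l : List (S N)) : List (S N) := l.map fun u => (u.1 + c, u.2)

@[simp] lemma lshift_nil (c : ℤ) : lshift c ([] : List (S N)) = [] := rfl

@[simp] lemma lshift_cons (c : ℤ) (t : S N) (r : List (S N)) :
    lshift c (t :: r) = (t.1 + c, t.2) :: lshift c r := rfl

@[simp] lemma lshift_length (c : ℤ) (l : List (S N)) : (lshift c l).length = l.length :=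
  List.length_map _

lemma estep_shift (c : ℤ) (s t : S N) :
    estep A (s.1 + c, s.2) (t.1 + c, t.2) = estep A s t := by
  simp [estep, step]

lemma ewt_shift (c : ℤ) (s : S N) (l : List (S N)) :
    ewt A (s.1 + c, s.2) (lshift c l) = ewt A s l := by
  induction l generalizing s with
  | nil => rfl
  | cons t r ih => rw [lshift_cons, ewt_cons, ewt_cons, estep_shift, ih t]

lemma pos_shift (c : ℤ) (s : S N) (l : List (S N)) (k : ℕ) :
    pos (s.1 + c, s.2) (lshift c l) k = ((pos s l k).1 + c, (pos s l k).2) := by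
  cases k with
  | zero => rfl
  | succ k =>
      rw [pos_succ, pos_succ]
      by_cases h : k < l.length
      · rw [List.getD_eq_getElem?_getD, List.getD_eq_getElem?_getD,
          List.getElem?_eq_getElem h, List.getElem?_eq_getElem (by simpa using h)]
        simp [lshift]
      · have h1 : l.length ≤ k := by omega
        have h2 : (lshift c l).length ≤ k := by rw [lshift_length]; omega
        rw [List.getD_eq_getElem?_getD, List.getD_eq_getElem?_getD,
          List.getElem?_eq_none h1, List.getElem?_eq_none h2]
        rfl

lemma endSt_shift (c : ℤ) (s : S N) (l : List (S N)) :
    endSt (s.1 + c, s.2) (lshift c l) = ((endSt s l).1 + c, (endSt s l).2) := by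
  rw [← pos_endSt, ← pos_endSt, lshift_length]
  exact pos_shift c s l l.length

/-- shifting as an equivalence of path spaces -/
def shiftEquiv (c : ℤ) : List (S N) ≃ List (S N) :=
  { toFun := lshift c
    invFun := lshift (-c)
    left_inv := fun l => by
      induction l with
      | nil => rfl
      | cons t r ih => simp [lshift] at ih ⊢; exact ih
    right_inv := fun l => by
      induction l with
      | nil => rfl
      | cons t r ih => simp [lshift] at ih ⊢; exact ih }

@[simp] lemma shiftEquiv_apply (c : ℤ) (l : List (S N)) :
    shiftEquiv (N := N) c l = lshift c l := rfl

lemma T_shift (c : ℤ) (i : Fin N) (E : List (S N) → Prop) :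
    T A ((c : ℤ), i) E = T A ((0 : ℤ), i) (fun l => E (lshift c l)) := by
  have e : List (S N) ≃ List (S N) :=
    { toFun := lshift c
      invFun := lshift (-c)
      left_inv := fun l => by
        induction l with
        | nil => rfl
        | cons t r ih => simp [lshift] at ih ⊢; exact ih
      right_inv := fun l => by
        induction l with
        | nil => rfl
        | cons t r ih => simp [lshift] at ih ⊢; exact ih }
  rw [T, T, ← Equiv.tsum_eq (shiftEquiv (N := N) c) (fun l => if E l then ewt A (c, i) l else 0)]
  refine tsum_congr fun l => ?_
  rw [shiftEquiv_apply]
  have hw : ewt A ((c : ℤ), i) (lshift c l) = ewt A ((0 : ℤ), i) l := by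
    have := ewt_shift (A := A) c ((0 : ℤ), i) l
    rwa [zero_add] at this
  rw [hw]

/-! ### the master splitting lemma (strong Markov property at a first entrance time) -/

/-- trajectories whose first entrance (after time 0) into the state set `C` happens at the
final time, ending at state `u` -/
def cutE (C : S N → Prop) (s u : S N) (l : List (S N)) : Prop :=
  l ≠ [] ∧ (∀ k, 0 < k → k < l.length → ¬ C (pos s l k)) ∧ endSt s l = u ∧ C u

/-- trajectories that decompose at their first entrance into `C` with a suffix condition -/
def decE (C : S N → Prop) (s : S N) (E₂ : S N → List (S N) → Prop) (l : List (S N)) : Prop :=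
  ∃ k, 0 < k ∧ k ≤ l.length ∧ (∀ m, 0 < m → m < k → ¬ C (pos s l m)) ∧ C (pos s l k) ∧
    E₂ (pos s l k) (l.drop k)

lemma master (C : S N → Prop) (s : S N) (E₂ : S N → List (S N) → Prop) :
    T A s (decE C s E₂) = ∑' u : S N, T A s (cutE C s u) * T A u (E₂ u) := by
  classical
  have hR : ∀ u : S N, T A s (cutE C s u) * T A u (E₂ u)
      = ∑' l₁ : List (S N), ∑' l₂ : List (S N),
          (if cutE C s u l₁ then ewt A s l₁ else 0) * (if E₂ u l₂ then ewt A u l₂ else 0) := by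
    intro u
    rw [T, T, ← ENNReal.tsum_mul_right]
    exact tsum_congr fun l₁ => (ENNReal.tsum_mul_left).symm
  rw [tsum_congr hR]
  have hT : ∑' p : S N × List (S N) × List (S N),
        (if cutE C s p.1 p.2.1 then ewt A s p.2.1 else 0) *
          (if E₂ p.1 p.2.2 then ewt A p.1 p.2.2 else 0)
      = ∑' u : S N, ∑' l₁ : List (S N), ∑' l₂ : List (S N),
          (if cutE C s u l₁ then ewt A s l₁ else 0) * (if E₂ u l₂ then ewt A u l₂ else 0) := by
    rw [ENNReal.tsum_prod']
    exact tsum_congr fun u => ENNReal.tsum_prod'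
  rw [← hT, T]
  -- cut function
  set cut : List (S N) → ℕ := fun l =>
    if h : ∃ k, 0 < k ∧ C (pos s l k) then Nat.find h else 0 with hcutdef
  have hcuteq : ∀ (l : List (S N)) (k : ℕ), 0 < k →
      (∀ m, 0 < m → m < k → ¬ C (pos s l m)) → C (pos s l k) → cut l = k := by
    intro l k hk0 hmin hC
    have hex : ∃ m, 0 < m ∧ C (pos s l m) := ⟨k, hk0, hC⟩
    rw [hcutdef]
    simp only [dif_pos hex]
    have h1 := Nat.find_spec hex
    have h2 : Nat.find hex ≤ k := Nat.find_min' hex ⟨hk0, hC⟩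
    rcases lt_trichotomy (Nat.find hex) k with h | h | h
    · exact absurd h1.2 (hmin _ h1.1 h)
    · exact h
    · omega
  refine (tsum_eq_tsum_of_ne_zero_bij
    (f := fun p : S N × List (S N) × List (S N) =>
      (if cutE C s p.1 p.2.1 then ewt A s p.2.1 else 0) *
        (if E₂ p.1 p.2.2 then ewt A p.1 p.2.2 else 0))
    (g := fun l : List (S N) => if decE C s E₂ l then ewt A s l else 0)
    (fun p => (pos s p.1 (cut p.1), (p.1 : List (S N)).take (cut p.1),
      (p.1 : List (S N)).drop (cut p.1))) ?_ ?_ ?_).symm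
  · -- injectivity
    intro p q h
    apply Subtype.ext
    have hp : (p : List (S N)) = (p : List (S N)).take (cut p) ++ (p : List (S N)).drop (cut p) :=
      (List.take_append_drop _ _).symm
    have hq : (q : List (S N)) = (q : List (S N)).take (cut q) ++ (q : List (S N)).drop (cut q) :=
      (List.take_append_drop _ _).symm
    rw [hp, hq]
    have h1 : (p : List (S N)).take (cut p) = (q : List (S N)).take (cut q) :=
      congrArg (fun x : S N × List (S N) × List (S N) => x.2.1) h
    have h2 : (p : List (S N)).drop (cut p) = (q : List (S N)).drop (cut q) :=
      congrArg (fun x : S N × List (S N) × List (S N) => x.2.2) h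
    rw [h1, h2]
  · -- support f ⊆ range i
    rintro ⟨u, l₁, l₂⟩ hf
    simp only [Function.mem_support, ne_eq, mul_eq_zero] at hf
    push_neg at hf
    obtain ⟨hf1, hf2⟩ := hf
    have hc : cutE C s u l₁ := by
      by_contra h
      rw [if_neg h] at hf1
      exact hf1 rfl
    have hw1 : ewt A s l₁ ≠ 0 := by
      intro h; rw [if_pos hc] at hf1; exact hf1 h
    have hE2 : E₂ u l₂ := by
      by_contra h
      rw [if_neg h] at hf2
      exact hf2 rfl
    have hw2 : ewt A u l₂ ≠ 0 := by
      intro h; rw [if_pos hE2] at hf2; exact hf2 h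
    obtain ⟨hne, hmid, hend, hCu⟩ := hc
    set l := l₁ ++ l₂ with hldef
    have hk0 : 0 < l₁.length := List.length_pos_iff.2 hne
    have hposk : pos s l l₁.length = u := by
      rw [pos_append_left le_rfl, pos_endSt, hend]
    have hmin : ∀ m, 0 < m → m < l₁.length → ¬ C (pos s l m) := by
      intro m hm0 hm
      rw [pos_append_left (le_of_lt hm)]
      exact hmid m hm0 hm
    have hdec : decE C s E₂ l := by
      refine ⟨l₁.length, hk0, by rw [hldef, List.length_append]; omega, hmin,
        by rw [hposk]; exact hCu, ?_⟩
      rw [hposk, hldef, List.drop_left]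
      exact hE2
    have hgl : (if decE C s E₂ l then ewt A s l else 0) ≠ 0 := by
      rw [if_pos hdec, hldef, ewt_append, hend]
      exact mul_ne_zero hw1 hw2
    refine ⟨⟨l, hgl⟩, ?_⟩
    have hcut : cut l = l₁.length := hcuteq l l₁.length hk0 hmin (by rw [hposk]; exact hCu)
    simp only [hcut]
    rw [hposk]
    rw [hldef]
    rw [List.take_left, List.drop_left]
  · -- value match
    rintro ⟨l, hl⟩
    have hdec : decE C s E₂ l := by
      by_contra h
      simp only [Function.mem_support, ne_eq] at hl
      exact hl (if_neg h)
    obtain ⟨k, hk0, hklen, hmin, hC, hE2⟩ := hdec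
    have hcut : cut l = k := hcuteq l k hk0 hmin hC
    simp only [hcut]
    have hcutE : cutE C s (pos s l k) (l.take k) := by
      refine ⟨?_, ?_, endSt_take hklen, hC⟩
      · intro h
        have := congrArg List.length h
        simp [min_eq_left hklen] at this
        omega
      · intro m hm0 hm
        rw [List.length_take, min_eq_left hklen] at hm
        rw [pos_take (le_of_lt hm) hklen]
        exact hmin m hm0 hm
    rw [if_pos hcutE, if_pos hE2, if_pos ⟨k, hk0, hklen, hmin, hC, hE2⟩]
    exact (ewt_take_drop hklen).symm


/-! ### hitting matrices over ℝ≥0∞ -/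

/-- first-hitting event in list form -/
def hitL (x : ℤ) (j : Fin N) (s : S N) (l : List (S N)) : Prop :=
  (endSt s l).1 = x ∧ (endSt s l).2 = j ∧ ∀ k < l.length, (pos s l k).1 ≠ x

variable (A) in
/-- ENNReal hitting matrix of level `x`, started at level 0 -/
def eH (x : ℤ) : Matrix (Fin N) (Fin N) ℝ≥0∞ :=
  Matrix.of fun i j => T A ((0 : ℤ), i) (hitL x j ((0 : ℤ), i))

lemma eH_apply (x : ℤ) (i j : Fin N) :
    eH A x i j = T A ((0 : ℤ), i) (hitL x j ((0 : ℤ), i)) := rfl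

lemma pos_shift0 (c : ℤ) (i : Fin N) (l : List (S N)) (k : ℕ) :
    pos ((c : ℤ), i) (lshift c l) k
      = ((pos ((0 : ℤ), i) l k).1 + c, (pos ((0 : ℤ), i) l k).2) := by
  have := pos_shift (N := N) c ((0 : ℤ), i) l k
  rwa [zero_add] at this

lemma endSt_shift0 (c : ℤ) (i : Fin N) (l : List (S N)) :
    endSt ((c : ℤ), i) (lshift c l)
      = ((endSt ((0 : ℤ), i) l).1 + c, (endSt ((0 : ℤ), i) l).2) := by
  have := endSt_shift (N := N) c ((0 : ℤ), i) l
  rwa [zero_add] at this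

lemma T_hit_shift (c x : ℤ) (j' j : Fin N) :
    T A ((c : ℤ), j') (hitL x j ((c : ℤ), j')) = eH A (x - c) j' j := by
  rw [T_shift, eH_apply]
  refine T_congr fun l _ => ?_
  unfold hitL
  rw [endSt_shift0, lshift_length]
  constructor
  · rintro ⟨h1, h2, h3⟩
    refine ⟨by omega, h2, fun k hk => ?_⟩
    have := h3 k hk
    rw [pos_shift0] at this
    omega
  · rintro ⟨h1, h2, h3⟩
    refine ⟨by omega, h2, fun k hk => ?_⟩
    rw [pos_shift0]
    have := h3 k hk
    omega

lemma eH_zero : eH A 0 = 1 := by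
  ext i j
  rw [eH_apply, Matrix.one_apply, T]
  rw [tsum_eq_single ([] : List (S N)) ?h0]
  · by_cases h : i = j
    · rw [if_pos (by subst h; exact ⟨rfl, rfl, by simp⟩), if_pos h, ewt_nil]
    · rw [if_neg (fun hl => h ?_), if_neg h]
      exact hl.2.1
  · intro l hl
    rw [if_neg]
    rintro ⟨h1, h2, h3⟩
    cases l with
    | nil => exact hl rfl
    | cons t r => exact h3 0 (by simp) rfl

lemma master_single (C : S N → Prop) (i : Fin N) (E₂ : S N → List (S N) → Prop) (y : ℤ)
    (hE : ∀ u l, E₂ u l → u.1 = y) :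
    T A ((0 : ℤ), i) (decE C ((0 : ℤ), i) E₂)
      = ∑ j' : Fin N,
          T A ((0 : ℤ), i) (cutE C ((0 : ℤ), i) (y, j')) * T A (y, j') (E₂ (y, j')) := by
  rw [master, ENNReal.tsum_prod']
  rw [tsum_eq_single y ?hz]
  · exact tsum_fintype _
  · intro y' hy'
    refine ENNReal.tsum_eq_zero.2 fun j' => ?_
    have h0 : T A (y', j') (E₂ (y', j')) = 0 :=
      T_zero fun l hE2 => absurd (hE _ _ hE2) hy'
    rw [h0, mul_zero]

lemma eH_succ (hskip : ∀ m : ℤ, 2 ≤ m → A m = 0) (n : ℕ) :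
    eH A ((n : ℤ) + 1) = eH A 1 * eH A (n : ℤ) := by
  ext i j
  rw [Matrix.mul_apply, eH_apply]
  set s : S N := ((0 : ℤ), i) with hs
  set C : S N → Prop := fun u => u.1 = 1 with hC
  set E₂ : S N → List (S N) → Prop := fun u l => u.1 = 1 ∧ hitL ((n : ℤ) + 1) j u l with hE₂
  have hiff : ∀ l, ewt A s l ≠ 0 → (hitL ((n : ℤ) + 1) j s l ↔ decE C s E₂ l) := by
    intro l hw
    have hinc := incr_le_one hskip hw
    constructor
    · rintro ⟨hend1, hend2, hbefore⟩
      have hlev : (1 : ℤ) ≤ (pos s l l.length).1 := by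
        rw [pos_endSt, hend1]; omega
      obtain ⟨k, hk0, hklen, hk1, hkmin⟩ :=
        first_hit (p := fun m => (pos s l m).1) (n := l.length) (c := 1)
          (fun k hk => hinc k hk) (by rw [hs]; simp) hlev
      refine ⟨k, hk0, hklen, ?_, hk1, hk1, ?_, ?_, ?_⟩
      · intro m hm0 hm
        have := hkmin m hm
        rw [hC]
        omega
      · rw [endSt_drop hklen]
        exact hend1
      · rw [endSt_drop hklen]
        exact hend2
      · intro m hm
        rw [List.length_drop] at hm
        rw [pos_drop' hklen (by rw [List.length_drop]; omega)]
        exact hbefore (k + m) (by omega)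
    · rintro ⟨k, hk0, hklen, hpre, hCk, hu1, hend1, hend2, hafter⟩
      refine ⟨by rw [← endSt_drop hklen]; exact hend1,
        by rw [← endSt_drop hklen]; exact hend2, ?_⟩
      intro m hm heq
      by_cases hmk : m < k
      · rcases Nat.eq_zero_or_pos m with hm0 | hm0
        · rw [hm0] at heq
          have : (pos s l 0).1 = 0 := by rw [hs]; rfl
          omega
        · have h1le : (1 : ℤ) ≤ (pos s l m).1 := by rw [heq]; omega
          obtain ⟨m', hm'0, hm'le, hm'1, _⟩ :=
            first_hit (p := fun m'' => (pos s l m'').1) (n := m) (c := 1)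
              (fun k' hk' => hinc k' (by omega)) (by rw [hs]; simp) h1le
          exact hpre m' hm'0 (by omega) hm'1
      · have hmlen : m - k < (l.drop k).length := by rw [List.length_drop]; omega
        have := hafter (m - k) hmlen
        rw [pos_drop' hklen (by rw [List.length_drop]; omega)] at this
        rw [show k + (m - k) = m by omega] at this
        exact this heq
  rw [T_congr hiff, master_single C i E₂ 1 (fun u l h => h.1)]
  refine Finset.sum_congr rfl fun j' _ => ?_
  congr 1
  · rw [eH_apply]
    refine (T_congr fun l _ => ?_)
    constructor
    · rintro ⟨hne, hmid, hend, hCu⟩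
      refine ⟨by rw [hend], by rw [hend], ?_⟩
      intro k hk
      rcases Nat.eq_zero_or_pos k with hk0 | hk0
      · rw [hk0]
        simp
      · exact hmid k hk0 hk
    · rintro ⟨h1, h2, h3⟩
      have hne : l ≠ [] := by
        intro hl
        subst hl
        simp at h1
      refine ⟨hne, fun k hk0 hk => h3 k hk, ?_, rfl⟩
      have h4 : endSt ((0 : ℤ), i) l
          = ((endSt ((0 : ℤ), i) l).1, (endSt ((0 : ℤ), i) l).2) := rfl
      rw [h4, h1, h2]
  · have hsub : T A ((1 : ℤ), j') (E₂ (1, j'))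
        = T A ((1 : ℤ), j') (hitL ((n : ℤ) + 1) j ((1 : ℤ), j')) := by
      refine T_congr fun l _ => ?_
      rw [hE₂]
      simp
    rw [hsub, T_hit_shift]
    congr 1
    omega

lemma eH_pow (hskip : ∀ m : ℤ, 2 ≤ m → A m = 0) (n : ℕ) :
    eH A (n : ℤ) = eH A 1 ^ n := by
  induction n with
  | zero => rw [Int.natCast_zero, eH_zero, pow_zero]
  | succ n ih =>
      rw [show ((n + 1 : ℕ) : ℤ) = (n : ℤ) + 1 by omega, eH_succ hskip, ih, pow_succ']


/-! ### strip-exit matrices -/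

lemma first_prop {P : ℕ → Prop} {n : ℕ} (hn : P n) (h0 : ¬ P 0) :
    ∃ k, 0 < k ∧ k ≤ n ∧ P k ∧ ∀ m < k, ¬ P m := by
  classical
  obtain ⟨k, hk, hmin⟩ := Nat.findX (⟨n, hn⟩ : ∃ m, P m)
  have hk0 : 0 < k := by
    rcases Nat.eq_zero_or_pos k with h | h
    · rw [h] at hk; exact absurd hk h0
    · exact h
  have hkn : k ≤ n := by
    by_contra h
    exact hmin n (by omega) hn
  exact ⟨k, hk0, hkn, hk, hmin⟩

/-- the complement of the open strip (-b, a) -/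
def Cstrip (a b : ℤ) : S N → Prop := fun u => a ≤ u.1 ∨ u.1 ≤ -b

variable (A) in
/-- weight of first exit from the strip at state `u` -/
def eFE (a b : ℤ) (i : Fin N) (u : S N) : ℝ≥0∞ :=
  T A ((0 : ℤ), i) (cutE (Cstrip a b) ((0 : ℤ), i) u)

variable (A) in
/-- upward strip exit matrix -/
def eUE (a b : ℤ) : Matrix (Fin N) (Fin N) ℝ≥0∞ :=
  Matrix.of fun i j => eFE A a b i ((a : ℤ), j)

variable (A) in
/-- downward strip exit, followed by first passage back up to level -b -/
def eDhat (a b : ℤ) : Matrix (Fin N) (Fin N) ℝ≥0∞ :=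
  Matrix.of fun i j =>
    ∑' u : S N, if u.1 ≤ -b then eFE A a b i u * eH A (-b - u.1) u.2 j else 0

lemma eH_strip_split {a b z : ℤ} (ha : 1 ≤ a) (hb : 1 ≤ b) (hz : a ≤ z ∨ z ≤ -b)
    (i j : Fin N) :
    eH A z i j = ∑' u : S N, eFE A a b i u * T A u (hitL z j u) := by
  rw [eH_apply]
  have hiff : ∀ l, ewt A ((0 : ℤ), i) l ≠ 0 →
      (hitL z j ((0 : ℤ), i) l ↔
        decE (Cstrip a b) ((0 : ℤ), i) (fun u l₂ => hitL z j u l₂) l) := by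
    intro l _
    constructor
    · rintro ⟨hend1, hend2, hbefore⟩
      have hPn : Cstrip a b (pos ((0 : ℤ), i) l l.length) := by
        rw [pos_endSt]
        rcases hz with h | h
        · exact Or.inl (by omega)
        · exact Or.inr (by omega)
      have hP0 : ¬ Cstrip a b (pos ((0 : ℤ), i) l 0) := by
        rw [pos_zero, Cstrip]
        push_neg
        constructor <;> [skip; skip] <;> simp <;> omega
      obtain ⟨k, hk0, hklen, hPk, hmin⟩ :=
        first_prop (P := fun m => Cstrip a b (pos ((0 : ℤ), i) l m)) hPn hP0
      refine ⟨k, hk0, hklen, fun m hm0 hm => hmin m hm, hPk, ?_, ?_, ?_⟩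
      · rw [endSt_drop hklen]; exact hend1
      · rw [endSt_drop hklen]; exact hend2
      · intro m hm
        rw [List.length_drop] at hm
        rw [pos_drop' hklen (by rw [List.length_drop]; omega)]
        exact hbefore (k + m) (by omega)
    · rintro ⟨k, hk0, hklen, hpre, hCk, hend1, hend2, hafter⟩
      refine ⟨by rw [← endSt_drop hklen]; exact hend1,
        by rw [← endSt_drop hklen]; exact hend2, ?_⟩
      intro m hm
      by_cases hmk : m < k
      · rcases Nat.eq_zero_or_pos m with hm0 | hm0
        · rw [hm0, pos_zero]
          simp only []
          omega
        · have := hpre m hm0 hmk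
          rw [Cstrip] at this
          push_neg at this
          omega
      · have hmlen : m - k < (l.drop k).length := by rw [List.length_drop]; omega
        have := hafter (m - k) hmlen
        rw [pos_drop' hklen (by rw [List.length_drop]; omega),
          show k + (m - k) = m by omega] at this
        exact this
  rw [T_congr hiff, master]
  exact tsum_congr fun u => rfl

lemma eFE_eq_zero (hskip : ∀ m : ℤ, 2 ≤ m → A m = 0) {a b : ℤ} (ha : 1 ≤ a) (hb : 1 ≤ b)
    {i : Fin N} {u : S N} (h : ¬ (u.1 = a ∨ u.1 ≤ -b)) : eFE A a b i u = 0 := by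
  push_neg at h
  refine T_zero fun l hc => ?_
  by_contra hw
  obtain ⟨hne, hmid, hend, hCu⟩ := hc
  have hua : a < u.1 := by
    rcases hCu with h1 | h1
    · omega
    · omega
  have hinc := incr_le_one hskip hw
  have hlen : 0 < l.length := List.length_pos_iff.2 hne
  have hlast : (pos ((0 : ℤ), i) l l.length).1 = u.1 := by rw [pos_endSt, hend]
  have hstep := hinc (l.length - 1) (by omega)
  rw [show l.length - 1 + 1 = l.length by omega] at hstep
  rcases Nat.eq_zero_or_pos (l.length - 1) with h0 | h0
  · rw [h0, pos_zero] at hstep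
    simp only [] at hstep
    omega
  · have hm := hmid (l.length - 1) h0 (by omega)
    rw [Cstrip] at hm
    push_neg at hm
    omega

/-- splitting the hitting matrix of an exterior level at the strip exit -/
lemma eH_split (hskip : ∀ m : ℤ, 2 ≤ m → A m = 0) {a b : ℤ} {z : ℤ}
    (ha : 1 ≤ a) (hb : 1 ≤ b) (hz : a ≤ z ∨ z ≤ -b) (i j : Fin N) :
    eH A z i j = (∑ j' : Fin N, eUE A a b i j' * eH A (z - a) j' j)
      + ∑' u : S N, (if u.1 ≤ -b then eFE A a b i u * eH A (z - u.1) u.2 j else 0) := by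
  rw [eH_strip_split ha hb hz i j]
  have hpt : ∀ u : S N, eFE A a b i u * T A u (hitL z j u)
      = eFE A a b i u * eH A (z - u.1) u.2 j := by
    intro u
    have h := T_hit_shift (A := A) u.1 z u.2 j
    rw [← h]
  rw [tsum_congr hpt]
  have hsplit : ∀ u : S N, eFE A a b i u * eH A (z - u.1) u.2 j
      = (if u.1 = a then eFE A a b i u * eH A (z - u.1) u.2 j else 0)
        + (if u.1 ≤ -b then eFE A a b i u * eH A (z - u.1) u.2 j else 0) := by
    intro u
    by_cases h1 : u.1 = a
    · rw [if_pos h1, if_neg (by omega), add_zero]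
    · by_cases h2 : u.1 ≤ -b
      · rw [if_neg h1, if_pos h2, zero_add]
      · rw [if_neg h1, if_neg h2, add_zero,
          eFE_eq_zero hskip ha hb (by push_neg; exact ⟨h1, by omega⟩), zero_mul]
  rw [tsum_congr hsplit, ENNReal.tsum_add]
  congr 1
  rw [ENNReal.tsum_prod']
  rw [tsum_eq_single a ?hz2]
  · rw [tsum_fintype]
    refine Finset.sum_congr rfl fun j' _ => ?_
    rw [if_pos rfl]
    rfl
  · intro y hy
    refine ENNReal.tsum_eq_zero.2 fun j' => ?_
    rw [if_neg hy]


/-- P2: splitting G^a at the strip exit -/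
lemma eH_top_eq (hskip : ∀ m : ℤ, 2 ≤ m → A m = 0) {a b : ℕ} (ha : 1 ≤ a) (hb : 1 ≤ b) :
    eH A (a : ℤ) = eUE A a b + eDhat A a b * eH A 1 ^ (a + b) := by
  ext i j
  rw [Matrix.add_apply,
    eH_split hskip (a := (a : ℤ)) (b := (b : ℤ)) (by exact_mod_cast ha)
      (by exact_mod_cast hb) (Or.inl le_rfl) i j]
  congr 1
  · rw [show (a : ℤ) - a = 0 by ring, eH_zero]
    rw [Finset.sum_eq_single j
      (fun j' _ hj' => by rw [Matrix.one_apply_ne hj', mul_zero])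
      (fun h => absurd (Finset.mem_univ j) h), Matrix.one_apply_eq, mul_one]
  · rw [Matrix.mul_apply]
    have hpt : ∀ u : S N,
        (if u.1 ≤ -(b : ℤ) then eFE A a b i u * eH A ((a : ℤ) - u.1) u.2 j else 0)
        = ∑ j'' : Fin N,
            (if u.1 ≤ -(b : ℤ) then eFE A a b i u * eH A (-(b : ℤ) - u.1) u.2 j'' else 0) *
              (eH A 1 ^ (a + b)) j'' j := by
      intro u
      by_cases h : u.1 ≤ -(b : ℤ)
      · rw [if_pos h]
        have htn : ((-(b : ℤ) - u.1).toNat : ℤ) = -(b : ℤ) - u.1 :=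
          Int.toNat_of_nonneg (by omega)
        have h1 : eH A ((a : ℤ) - u.1) = eH A 1 ^ ((-(b : ℤ) - u.1).toNat + (a + b)) := by
          rw [← eH_pow hskip,
            show ((((-(b : ℤ) - u.1).toNat + (a + b) : ℕ)) : ℤ) = (a : ℤ) - u.1 by
              push_cast [htn]; omega]
        have h2 : eH A (-(b : ℤ) - u.1) = eH A 1 ^ ((-(b : ℤ) - u.1).toNat) := by
          rw [← eH_pow hskip, htn]
        have h3 : eH A ((a : ℤ) - u.1) u.2 j
            = ∑ j'' : Fin N, eH A (-(b : ℤ) - u.1) u.2 j'' * (eH A 1 ^ (a + b)) j'' j := by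
          rw [h1, pow_add, Matrix.mul_apply, h2]
        rw [h3, Finset.mul_sum]
        refine Finset.sum_congr rfl fun j'' _ => ?_
        rw [if_pos h, mul_assoc]
      · rw [if_neg h]
        simp [h]
    rw [tsum_congr hpt, Summable.tsum_finsetSum (fun _ _ => ENNReal.summable)]
    refine Finset.sum_congr rfl fun j'' _ => ?_
    rw [ENNReal.tsum_mul_right]
    rfl

/-- P3: splitting the hitting matrix of -b at the strip exit -/
lemma eH_bot_eq (hskip : ∀ m : ℤ, 2 ≤ m → A m = 0) {a b : ℕ} (ha : 1 ≤ a) (hb : 1 ≤ b) :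
    eH A (-(b : ℤ)) = eUE A a b * eH A (-((a : ℤ) + b)) + eDhat A a b := by
  ext i j
  rw [Matrix.add_apply,
    eH_split hskip (a := (a : ℤ)) (b := (b : ℤ)) (by exact_mod_cast ha)
      (by exact_mod_cast hb) (Or.inr le_rfl) i j]
  congr 1
  · rw [Matrix.mul_apply]
    refine Finset.sum_congr rfl fun j' _ => ?_
    rw [show -(b : ℤ) - a = -((a : ℤ) + b) by ring]

/-! ### occupation matrices -/

lemma first_prop' {P : ℕ → Prop} {n : ℕ} (hn : P n) :
    ∃ k, k ≤ n ∧ P k ∧ ∀ m < k, ¬ P m := by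
  classical
  obtain ⟨k, hk, hmin⟩ := Nat.findX (⟨n, hn⟩ : ∃ m, P m)
  have hkn : k ≤ n := by
    by_contra h
    exact hmin n (by omega) hn
  exact ⟨k, hkn, hk, hmin⟩

variable (A) in
/-- occupation mass matrix at level `x` -/
def eOcc (x : ℤ) : Matrix (Fin N) (Fin N) ℝ≥0∞ :=
  Matrix.of fun i j => T A ((0 : ℤ), i) fun l => endSt ((0 : ℤ), i) l = ((x : ℤ), j)

lemma eOcc_apply (x : ℤ) (i j : Fin N) :
    eOcc A x i j = T A ((0 : ℤ), i) fun l => endSt ((0 : ℤ), i) l = ((x : ℤ), j) := rfl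

variable (A) in
/-- occupation mass matrix at level 0 avoiding levels in `V` -/
def eLV (V : ℤ → Prop) : Matrix (Fin N) (Fin N) ℝ≥0∞ :=
  Matrix.of fun i j => T A ((0 : ℤ), i) fun l =>
    endSt ((0 : ℤ), i) l = ((0 : ℤ), j) ∧ ∀ k ≤ l.length, ¬ V (pos ((0 : ℤ), i) l k).1

variable (A) in
/-- first-return-to-0 matrix avoiding levels in `V` -/
def eRV (V : ℤ → Prop) : Matrix (Fin N) (Fin N) ℝ≥0∞ :=
  Matrix.of fun i j =>
    T A ((0 : ℤ), i) (cutE (fun u => u.1 = 0 ∨ V u.1) ((0 : ℤ), i) ((0 : ℤ), j))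

lemma T_case (s : S N) (E P : List (S N) → Prop) :
    T A s E = T A s (fun l => E l ∧ P l) + T A s (fun l => E l ∧ ¬ P l) := by
  rw [T, T, T, ← ENNReal.tsum_add]
  refine tsum_congr fun l => ?_
  by_cases h1 : E l <;> by_cases h2 : P l <;> simp [h1, h2]

lemma T_nil_split (s : S N) (E : List (S N) → Prop) :
    T A s E = (if E [] then 1 else 0) + T A s (fun l => E l ∧ l ≠ []) := by
  have key : ∀ E' : List (S N) → Prop,
      T A s E' = (if E' [] then ewt A s [] else 0)
        + ∑' p : S N × List (S N), if E' (p.1 :: p.2) then ewt A s (p.1 :: p.2) else 0 := by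
    intro E'
    rw [T]
    exact tsum_list _
  rw [key E, key (fun l => E l ∧ l ≠ [])]
  rw [ewt_nil, if_neg (by simp : ¬ (E [] ∧ ([] : List (S N)) ≠ [])), zero_add]
  congr 1
  refine tsum_congr fun p => ?_
  have hc : (E (p.1 :: p.2) ∧ p.1 :: p.2 ≠ []) = E (p.1 :: p.2) := by simp
  rw [hc]

/-- P4/P5: one-excursion decomposition of the taboo occupation matrix -/
lemma eLV_eq (V : ℤ → Prop) (hV : ¬ V 0) : eLV A V = 1 + eRV A V * eLV A V := by
  ext i j
  rw [Matrix.add_apply, Matrix.mul_apply, Matrix.one_apply]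
  show T A ((0 : ℤ), i) _ = _
  rw [T_nil_split]
  congr 1
  · by_cases h : i = j
    · subst h
      rw [if_pos ⟨rfl, fun k hk => by
        have hk0 : k = 0 := Nat.le_zero.1 (by simpa using hk)
        subst hk0
        simpa using hV⟩, if_pos rfl]
    · rw [if_neg (fun hc => h (by simpa using congrArg Prod.snd hc.1)), if_neg h]
  · set C : S N → Prop := fun u => u.1 = 0 ∨ V u.1 with hC
    set E₂ : S N → List (S N) → Prop := fun u l₂ => u.1 = 0 ∧
      (endSt u l₂ = ((0 : ℤ), j) ∧ ∀ k ≤ l₂.length, ¬ V (pos u l₂ k).1) with hE₂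
    have hiff : ∀ l, ewt A ((0 : ℤ), i) l ≠ 0 →
        (((endSt ((0 : ℤ), i) l = ((0 : ℤ), j) ∧
            ∀ k ≤ l.length, ¬ V (pos ((0 : ℤ), i) l k).1) ∧ l ≠ []) ↔
          decE C ((0 : ℤ), i) E₂ l) := by
      intro l _
      constructor
      · rintro ⟨⟨hend, htaboo⟩, hne⟩
        have hlen : 0 < l.length := List.length_pos_iff.2 hne
        have hPn : C (pos ((0 : ℤ), i) l (l.length - 1 + 1)) := by
          rw [show l.length - 1 + 1 = l.length by omega, pos_endSt, hend]
          exact Or.inl rfl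
        obtain ⟨m', hm'len, hPm', hmin⟩ :=
          first_prop' (P := fun m => C (pos ((0 : ℤ), i) l (m + 1))) hPn
        set k := m' + 1 with hk
        have hklen : k ≤ l.length := by omega
        have hlev0 : (pos ((0 : ℤ), i) l k).1 = 0 := by
          rcases hPm' with h | h
          · exact h
          · exact absurd h (htaboo k hklen)
        refine ⟨k, by omega, hklen, ?_, hPm', hlev0, ?_, ?_⟩
        · intro m hm0 hm
          have := hmin (m - 1) (by omega)
          rw [show m - 1 + 1 = m by omega] at this
          exact this
        · rw [endSt_drop hklen]
          exact hend
        · intro k' hk'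
          rw [List.length_drop] at hk'
          rw [pos_drop' hklen (by rw [List.length_drop]; omega)]
          exact htaboo (k + k') (by omega)
      · rintro ⟨k, hk0, hklen, hpre, hCk, hu1, hend, htab⟩
        refine ⟨⟨by rw [← endSt_drop hklen]; exact hend, ?_⟩, ?_⟩
        · intro k' hk'
          rcases Nat.lt_or_ge k' k with hlt | hge
          · rcases Nat.eq_zero_or_pos k' with h0 | h0
            · rw [h0, pos_zero]
              exact hV
            · have := hpre k' h0 hlt
              simp only [hC] at this
              push_neg at this
              exact this.2
          · have := htab (k' - k) (by rw [List.length_drop]; omega)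
            rw [pos_drop' hklen (by rw [List.length_drop]; omega),
              show k + (k' - k) = k' by omega] at this
            exact this
        · intro hl
          subst hl
          simp at hklen
          omega
    rw [T_congr hiff, master_single C i E₂ 0 (fun u l h => h.1)]
    refine Finset.sum_congr rfl fun j' _ => ?_
    congr 1
    have hsub : T A ((0 : ℤ), j') (E₂ ((0 : ℤ), j'))
        = T A ((0 : ℤ), j') fun l => endSt ((0 : ℤ), j') l = ((0 : ℤ), j) ∧
            ∀ k ≤ l.length, ¬ V (pos ((0 : ℤ), j') l k).1 := by
      refine T_congr fun l _ => ?_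
      rw [hE₂]
      simp
    rw [hsub]
    rfl

/-- M4: occupation at a nonzero level factors through its first hitting -/
lemma eOcc_eq (x : ℤ) (hx : x ≠ 0) : eOcc A x = eH A x * eOcc A 0 := by
  ext i j
  rw [eOcc_apply, Matrix.mul_apply]
  set C : S N → Prop := fun u => u.1 = x with hC
  set E₂ : S N → List (S N) → Prop := fun u l₂ => u.1 = x ∧ endSt u l₂ = (x, j) with hE₂
  have hiff : ∀ l, ewt A ((0 : ℤ), i) l ≠ 0 →
      ((endSt ((0 : ℤ), i) l = ((x : ℤ), j)) ↔ decE C ((0 : ℤ), i) E₂ l) := by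
    intro l _
    constructor
    · intro hend
      have hne : l ≠ [] := by
        intro hl
        subst hl
        simp at hend
        exact hx hend.1.symm
      have hlen : 0 < l.length := List.length_pos_iff.2 hne
      have hPn : C (pos ((0 : ℤ), i) l l.length) := by
        rw [pos_endSt, hend]
      obtain ⟨k, hklen, hPk, hmin⟩ :=
        first_prop' (P := fun m => C (pos ((0 : ℤ), i) l m)) hPn
      have hk0 : 0 < k := by
        rcases Nat.eq_zero_or_pos k with h0 | h0
        · exfalso
          rw [h0, pos_zero] at hPk
          simp only [hC] at hPk
          have : (0 : ℤ) = x := hPk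
          omega
        · exact h0
      refine ⟨k, hk0, hklen, fun m _ hm => hmin m hm, hPk, hPk, ?_⟩
      rw [endSt_drop hklen]
      exact hend
    · rintro ⟨k, hk0, hklen, hpre, hCk, hu1, hend⟩
      rw [← endSt_drop hklen]
      exact hend
  rw [T_congr hiff, master_single C i E₂ x (fun u l h => h.1)]
  refine Finset.sum_congr rfl fun j' _ => ?_
  congr 1
  · rw [eH_apply]
    refine (T_congr fun l _ => ?_)
    constructor
    · rintro ⟨hne, hmid, hend, hCu⟩
      refine ⟨by rw [hend], by rw [hend], ?_⟩
      intro k hk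
      rcases Nat.eq_zero_or_pos k with hk0 | hk0
      · rw [hk0, pos_zero]
        intro hh
        have : (0 : ℤ) = x := hh
        omega
      · exact hmid k hk0 hk
    · rintro ⟨h1, h2, h3⟩
      have hne : l ≠ [] := by
        intro hl
        subst hl
        simp at h1
        exact hx h1.symm
      refine ⟨hne, fun k hk0 hk => h3 k hk, ?_, rfl⟩
      have h4 : endSt ((0 : ℤ), i) l
          = ((endSt ((0 : ℤ), i) l).1, (endSt ((0 : ℤ), i) l).2) := rfl
      rw [h4, h1, h2]
  · have hsub : T A ((x : ℤ), j') (E₂ ((x : ℤ), j'))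
        = T A ((x : ℤ), j') fun l => endSt ((x : ℤ), j') l = ((x : ℤ), j) := by
      refine T_congr fun l _ => ?_
      rw [hE₂]
      simp
    rw [hsub, T_shift, eOcc_apply]
    refine T_congr fun l _ => ?_
    rw [endSt_shift0]
    constructor
    · intro hh
      have h1 := congrArg Prod.fst hh
      have h2 := congrArg Prod.snd hh
      simp only [] at h1 h2
      have h3 : endSt ((0 : ℤ), j') l
          = ((endSt ((0 : ℤ), j') l).1, (endSt ((0 : ℤ), j') l).2) := rfl
      rw [h3, show (endSt ((0 : ℤ), j') l).1 = 0 by omega, h2]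
    · intro hh
      rw [hh]
      simp


lemma T_occ_shift (c x : ℤ) (j' j : Fin N) :
    T A ((c : ℤ), j') (fun l => endSt ((c : ℤ), j') l = (x, j)) = eOcc A (x - c) j' j := by
  rw [T_shift, eOcc_apply]
  refine T_congr fun l _ => ?_
  rw [endSt_shift0]
  constructor
  · intro hh
    have h1 := congrArg Prod.fst hh
    have h2 := congrArg Prod.snd hh
    simp only [] at h1 h2
    have h3 : endSt ((0 : ℤ), j') l
        = ((endSt ((0 : ℤ), j') l).1, (endSt ((0 : ℤ), j') l).2) := rfl
    rw [h3, show (endSt ((0 : ℤ), j') l).1 = x - c by omega, h2]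
  · intro hh
    rw [hh]
    have : x - c + c = x := by omega
    rw [this]

lemma T_cutE_level (x : ℤ) (hx : x ≠ 0) (i j' : Fin N) :
    T A ((0 : ℤ), i) (cutE (fun u => u.1 = x) ((0 : ℤ), i) ((x : ℤ), j')) = eH A x i j' := by
  rw [eH_apply]
  refine T_congr fun l _ => ?_
  constructor
  · rintro ⟨hne, hmid, hend, hCu⟩
    refine ⟨by rw [hend], by rw [hend], ?_⟩
    intro k hk
    rcases Nat.eq_zero_or_pos k with hk0 | hk0
    · rw [hk0, pos_zero]
      intro hh
      have : (0 : ℤ) = x := hh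
      omega
    · exact hmid k hk0 hk
  · rintro ⟨h1, h2, h3⟩
    have hne : l ≠ [] := by
      intro hl
      subst hl
      simp at h1
      exact hx h1.symm
    refine ⟨hne, fun k hk0 hk => h3 k hk, ?_, rfl⟩
    have h4 : endSt ((0 : ℤ), i) l
        = ((endSt ((0 : ℤ), i) l).1, (endSt ((0 : ℤ), i) l).2) := rfl
    rw [h4, h1, h2]

/-- P6: splitting the occupation of level 0 at the first visit to level n -/
lemma eOcc_split (n : ℕ) (hn : 1 ≤ n) :
    eOcc A 0 = eLV A (fun y => y = (n : ℤ)) + eH A (n : ℤ) * eOcc A (-(n : ℤ)) := by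
  ext i j
  rw [Matrix.add_apply, Matrix.mul_apply, eOcc_apply]
  rw [T_case ((0 : ℤ), i) _
    (fun l => ∀ k ≤ l.length, (pos ((0 : ℤ), i) l k).1 ≠ (n : ℤ))]
  congr 1
  set C : S N → Prop := fun u => u.1 = (n : ℤ) with hC
  set E₂ : S N → List (S N) → Prop :=
    fun u l₂ => u.1 = (n : ℤ) ∧ endSt u l₂ = ((0 : ℤ), j) with hE₂
  have hiff : ∀ l, ewt A ((0 : ℤ), i) l ≠ 0 →
      ((endSt ((0 : ℤ), i) l = ((0 : ℤ), j) ∧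
          ¬ ∀ k ≤ l.length, (pos ((0 : ℤ), i) l k).1 ≠ (n : ℤ)) ↔
        decE C ((0 : ℤ), i) E₂ l) := by
    intro l _
    constructor
    · rintro ⟨hend, hvis⟩
      push_neg at hvis
      obtain ⟨k0, hk0len, hk0⟩ := hvis
      obtain ⟨k, hklen, hPk, hmin⟩ :=
        first_prop' (P := fun m => (pos ((0 : ℤ), i) l m).1 = (n : ℤ)) hk0
      have hkpos : 0 < k := by
        rcases Nat.eq_zero_or_pos k with h0 | h0
        · exfalso
          rw [h0, pos_zero] at hPk
          have : (0 : ℤ) = (n : ℤ) := hPk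
          omega
        · exact h0
      refine ⟨k, hkpos, by omega, fun m _ hm => hmin m hm, hPk, hPk, ?_⟩
      rw [endSt_drop (by omega)]
      exact hend
    · rintro ⟨k, hk0, hklen, hpre, hCk, hu1, hend⟩
      refine ⟨by rw [← endSt_drop hklen]; exact hend, ?_⟩
      push_neg
      exact ⟨k, hklen, hCk⟩
  rw [T_congr hiff, master_single C i E₂ (n : ℤ) (fun u l h => h.1)]
  refine Finset.sum_congr rfl fun j' _ => ?_
  congr 1
  · exact T_cutE_level (n : ℤ) (by omega) i j'
  · have hsub : T A ((n : ℤ), j') (E₂ ((n : ℤ), j'))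
        = T A ((n : ℤ), j') fun l => endSt ((n : ℤ), j') l = ((0 : ℤ), j) := by
      refine T_congr fun l _ => ?_
      rw [hE₂]
      simp
    rw [hsub, T_occ_shift]
    congr 2
    omega

/-! ### prefix-freeness and entry bounds -/

lemma hitL_pf (x : ℤ) (j : Fin N) (s : S N) :
    ∀ l l', hitL x j s l → hitL x j s (l ++ l') → l' = [] := by
  intro l l' h1 h2
  by_contra hne
  have hlen : 0 < l'.length := List.length_pos_iff.2 hne
  have := h2.2.2 l.length (by rw [List.length_append]; omega)
  rw [pos_append_left le_rfl, pos_endSt] at this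
  exact this h1.1

lemma cutE_pf (C : S N → Prop) (s u : S N) :
    ∀ l l', cutE C s u l → cutE C s u (l ++ l') → l' = [] := by
  intro l l' h1 h2
  by_contra hne
  have hlen : 0 < l'.length := List.length_pos_iff.2 hne
  have hlen1 : 0 < l.length := List.length_pos_iff.2 h1.1
  have := h2.2.1 l.length hlen1 (by rw [List.length_append]; omega)
  rw [pos_append_left le_rfl, pos_endSt, h1.2.2.1] at this
  exact this h1.2.2.2

section Bounds

variable (hA : ∀ m i j, 0 ≤ A m i j)
  (hsum : ∀ i, Summable fun q : ℤ × Fin N => A q.1 i q.2)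
  (hsub : ∀ i, ∑' q : ℤ × Fin N, A q.1 i q.2 ≤ 1)

include hA hsum hsub

lemma eH_le_one (x : ℤ) (i j : Fin N) : eH A x i j ≤ 1 :=
  T_le_one hA hsum hsub (hitL_pf x j ((0 : ℤ), i))

lemma eFE_le_one (a b : ℤ) (i : Fin N) (u : S N) : eFE A a b i u ≤ 1 :=
  T_le_one hA hsum hsub (cutE_pf _ _ _)

lemma eRV_le_one (V : ℤ → Prop) (i j : Fin N) : eRV A V i j ≤ 1 :=
  T_le_one hA hsum hsub (cutE_pf _ _ _)

end Bounds

/-! ### first-step analysis for G -/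

variable (A) in
/-- the matrix `B = Σ_{m ≤ 0} A_m G^{-m}` -/
def eB : Matrix (Fin N) (Fin N) ℝ≥0∞ :=
  Matrix.of fun i j =>
    ∑' u : S N, if u.1 ≤ 0 then estep A ((0 : ℤ), i) u * eH A (-u.1) u.2 j else 0

variable (A) in
/-- the matrix `A 1` over ℝ≥0∞ -/
def eA1 : Matrix (Fin N) (Fin N) ℝ≥0∞ :=
  Matrix.of fun i j => ENNReal.ofReal (A 1 i j)

lemma T_cut_univ (s u : S N) :
    T A s (cutE (fun _ => True) s u) = estep A s u := by
  rw [T, tsum_eq_single [u] ?h1]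
  · rw [if_pos ⟨List.cons_ne_nil _ _, fun k hk0 hk1 => by simp at hk1; omega,
      rfl, trivial⟩, ewt_cons, ewt_nil, mul_one]
  · intro l hl
    rw [if_neg]
    rintro ⟨hne, hmid, hend, _⟩
    cases l with
    | nil => exact hne rfl
    | cons t r =>
        cases r with
        | nil =>
            simp only [endSt_cons, endSt_nil] at hend
            exact hl (by rw [hend])
        | cons t2 r2 =>
            exact hmid 1 (by omega) (by simp) trivial

/-- P7: first-step decomposition of G -/
lemma eG_eq (hskip : ∀ m : ℤ, 2 ≤ m → A m = 0) :
    eH A 1 = eA1 A + eB A * eH A 1 := by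
  ext i j
  rw [Matrix.add_apply, Matrix.mul_apply, eH_apply]
  set E₂ : S N → List (S N) → Prop := fun u l₂ => hitL 1 j u l₂ with hE₂
  have hiff : ∀ l, ewt A ((0 : ℤ), i) l ≠ 0 →
      (hitL 1 j ((0 : ℤ), i) l ↔ decE (fun _ => True) ((0 : ℤ), i) E₂ l) := by
    intro l _
    constructor
    · rintro ⟨h1, h2, h3⟩
      have hne : l ≠ [] := by
        intro hl
        subst hl
        simp at h1
      have hlen : 0 < l.length := List.length_pos_iff.2 hne
      refine ⟨1, by omega, by omega, fun m hm0 hm => by omega, trivial, ?_, ?_, ?_⟩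
      · rw [endSt_drop (by omega)]
        exact h1
      · rw [endSt_drop (by omega)]
        exact h2
      · intro m hm
        rw [List.length_drop] at hm
        rw [pos_drop' (by omega) (by rw [List.length_drop]; omega)]
        exact h3 (1 + m) (by omega)
    · rintro ⟨k, hk0, hklen, hpre, _, hend1, hend2, hafter⟩
      have hk1 : k = 1 := by
        by_contra h
        exact hpre 1 (by omega) (by omega) trivial
      subst hk1
      refine ⟨by rw [← endSt_drop hklen]; exact hend1,
        by rw [← endSt_drop hklen]; exact hend2, ?_⟩
      intro m hm
      rcases Nat.eq_zero_or_pos m with hm0 | hm0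
      · rw [hm0, pos_zero]
        intro hh
        have : (0 : ℤ) = 1 := hh
        omega
      · have hmlen : m - 1 < (l.drop 1).length := by rw [List.length_drop]; omega
        have := hafter (m - 1) hmlen
        rw [pos_drop' hklen (by rw [List.length_drop]; omega),
          show 1 + (m - 1) = m by omega] at this
        exact this
  rw [T_congr hiff, master]
  have hpt : ∀ u : S N,
      T A ((0 : ℤ), i) (cutE (fun _ => True) ((0 : ℤ), i) u) * T A u (E₂ u)
      = estep A ((0 : ℤ), i) u * eH A (1 - u.1) u.2 j := by
    intro u
    rw [T_cut_univ]
    congr 1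
    have h := T_hit_shift (A := A) u.1 1 u.2 j
    rw [← h]
  rw [tsum_congr hpt]
  have hsplit : ∀ u : S N, estep A ((0 : ℤ), i) u * eH A (1 - u.1) u.2 j
      = (if u.1 = 1 then estep A ((0 : ℤ), i) u * eH A (1 - u.1) u.2 j else 0)
        + (if u.1 ≤ 0 then estep A ((0 : ℤ), i) u * eH A (1 - u.1) u.2 j else 0) := by
    intro u
    by_cases h1 : u.1 = 1
    · rw [if_pos h1, if_neg (by omega), add_zero]
    · by_cases h2 : u.1 ≤ 0
      · rw [if_neg h1, if_pos h2, zero_add]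
      · rw [if_neg h1, if_neg h2, add_zero]
        have : estep A ((0 : ℤ), i) u = 0 := by
          rw [estep, step, hskip (u.1 - 0) (by omega)]
          simp
        rw [this, zero_mul]
  rw [tsum_congr hsplit, ENNReal.tsum_add]
  congr 1
  · rw [ENNReal.tsum_prod']
    rw [tsum_eq_single 1 ?hz1]
    · rw [tsum_fintype]
      rw [Finset.sum_eq_single j
        (fun j' _ hj' => by
          rw [if_pos rfl, show (1 : ℤ) - (((1 : ℤ), j') : S N).1 = 0 from by omega]
          rw [eH_zero, Matrix.one_apply_ne hj', mul_zero])
        (fun h => absurd (Finset.mem_univ j) h)]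
      rw [if_pos rfl, show (1 : ℤ) - (((1 : ℤ), j) : S N).1 = 0 from by omega,
        eH_zero, Matrix.one_apply_eq, mul_one]
      rw [estep, step]
      show ENNReal.ofReal (A (1 - 0) i j) = eA1 A i j
      norm_num
      rfl
    · intro y hy
      refine ENNReal.tsum_eq_zero.2 fun j' => ?_
      rw [if_neg hy]
  · have hpt2 : ∀ u : S N,
        (if u.1 ≤ 0 then estep A ((0 : ℤ), i) u * eH A (1 - u.1) u.2 j else 0)
        = ∑ j'' : Fin N,
            (if u.1 ≤ 0 then estep A ((0 : ℤ), i) u * eH A (-u.1) u.2 j'' else 0) *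
              eH A 1 j'' j := by
      intro u
      by_cases h : u.1 ≤ 0
      · rw [if_pos h]
        have htn : (((-u.1).toNat : ℤ)) = -u.1 := Int.toNat_of_nonneg (by omega)
        have h1 : eH A (1 - u.1) = eH A 1 ^ ((-u.1).toNat + 1) := by
          rw [← eH_pow hskip,
            show ((((-u.1).toNat + 1 : ℕ)) : ℤ) = 1 - u.1 by push_cast [htn]; omega]
        have h2 : eH A (-u.1) = eH A 1 ^ ((-u.1).toNat) := by
          rw [← eH_pow hskip, htn]
        have h3 : eH A (1 - u.1) u.2 j
            = ∑ j'' : Fin N, eH A (-u.1) u.2 j'' * eH A 1 j'' j := by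
          rw [h1, pow_add, pow_one, Matrix.mul_apply, h2]
        rw [h3, Finset.mul_sum]
        refine Finset.sum_congr rfl fun j'' _ => ?_
        rw [if_pos h, mul_assoc]
      · rw [if_neg h]
        simp [h]
    rw [tsum_congr hpt2, Summable.tsum_finsetSum (fun _ _ => ENNReal.summable)]
    refine Finset.sum_congr rfl fun j'' _ => ?_
    rw [ENNReal.tsum_mul_right]
    rfl

lemma eB_le_one (hA : ∀ m i j, 0 ≤ A m i j)
    (hsum : ∀ i, Summable fun q : ℤ × Fin N => A q.1 i q.2)
    (hsub : ∀ i, ∑' q : ℤ × Fin N, A q.1 i q.2 ≤ 1) (i j : Fin N) :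
    eB A i j ≤ 1 := by
  have h1 : eB A i j ≤ ∑' u : S N, estep A ((0 : ℤ), i) u := by
    refine ENNReal.tsum_le_tsum fun u => ?_
    split_ifs with h
    · calc estep A ((0 : ℤ), i) u * eH A (-u.1) u.2 j
          ≤ estep A ((0 : ℤ), i) u * 1 := mul_le_mul_right (eH_le_one hA hsum hsub _ _ _) _
        _ = estep A ((0 : ℤ), i) u := mul_one _
    · exact zero_le
  exact h1.trans (estep_rowsum hA hsum hsub _)


/-! ### finiteness and transfer to ℝ -/

lemma T_fiber (s : S N) (Efam : ℕ → (ℕ → S N) → Prop) :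
    (∑' n : ℕ, ∑' l : List (S N),
        if Efam n (pos s l) ∧ l.length = n then ewt A s l else 0)
      = T A s (fun l => Efam l.length (pos s l)) := by
  rw [T, ENNReal.tsum_comm]
  refine tsum_congr fun l => ?_
  rw [tsum_eq_single l.length (by intro n hn; rw [if_neg (by tauto)])]
  by_cases h : Efam l.length (pos s l)
  · rw [if_pos ⟨h, rfl⟩, if_pos h]
  · rw [if_neg (by tauto), if_neg h]

lemma eprob_ne_top (hA : ∀ m i j, 0 ≤ A m i j)
    (hsum : ∀ i, Summable fun q : ℤ × Fin N => A q.1 i q.2)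
    (hsub : ∀ i, ∑' q : ℤ × Fin N, A q.1 i q.2 ≤ 1)
    (s : S N) (n : ℕ) (Ev : (ℕ → S N) → Prop) :
    (∑' l : List (S N), if Ev (pos s l) ∧ l.length = n then ewt A s l else 0) ≠ ∞ := by
  have hpf : ∀ l l' : List (S N), l.length = n → (l ++ l').length = n → l' = [] := by
    intro l l' h1' h2'
    rw [List.length_append] at h2'
    exact List.length_eq_zero_iff.1 (by omega)
  refine ne_top_of_le_ne_top
    (T_ne_top hA hsum hsub (s := s) (E := fun l => l.length = n) hpf) ?_
  rw [T]
  refine ENNReal.tsum_le_tsum fun l => ?_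
  by_cases h : Ev (pos s l) ∧ l.length = n
  · rw [if_pos h, if_pos h.2]
  · rw [if_neg h]
    exact zero_le

variable (A) in
/-- the ℝ≥0∞ probability of an event at horizon `n` -/
def eprob (s : S N) (n : ℕ) (Ev : (ℕ → S N) → Prop) : ℝ≥0∞ :=
  ∑' l : List (S N), if Ev (pos s l) ∧ l.length = n then ewt A s l else 0

lemma prob_eq_eprob (hA : ∀ m i j, 0 ≤ A m i j) {s : S N} {n : ℕ} {Ev : (ℕ → S N) → Prop} :
    prob A s n Ev = (eprob A s n Ev).toReal := prob_eq_T hA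

lemma eprob_ne_top' (hA : ∀ m i j, 0 ≤ A m i j)
    (hsum : ∀ i, Summable fun q : ℤ × Fin N => A q.1 i q.2)
    (hsub : ∀ i, ∑' q : ℤ × Fin N, A q.1 i q.2 ≤ 1)
    (s : S N) (n : ℕ) (Ev : (ℕ → S N) → Prop) : eprob A s n Ev ≠ ∞ :=
  eprob_ne_top hA hsum hsub s n Ev

lemma T_fiber' (s : S N) (Efam : ℕ → (ℕ → S N) → Prop) :
    (∑' n : ℕ, eprob A s n (Efam n)) = T A s (fun l => Efam l.length (pos s l)) :=
  T_fiber s Efam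

lemma prob_nonneg (hA : ∀ m i j, 0 ≤ A m i j) (s : S N) (n : ℕ) (Ev : (ℕ → S N) → Prop) :
    0 ≤ prob A s n Ev := by
  rw [prob_eq_T hA]
  exact ENNReal.toReal_nonneg

lemma eOcc_ne_top (hA : ∀ m i j, 0 ≤ A m i j)
    (hsum : ∀ i, Summable fun q : ℤ × Fin N => A q.1 i q.2)
    (hsub : ∀ i, ∑' q : ℤ × Fin N, A q.1 i q.2 ≤ 1)
    (hL : ∀ i j : Fin N,
      Summable fun k : ℕ => prob A ((0 : ℤ), i) k fun p => p k = ((0 : ℤ), j))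
    (i j : Fin N) : eOcc A 0 i j ≠ ∞ := by
  have hev : eOcc A 0 i j
      = T A ((0 : ℤ), i)
          (fun l => (fun n (p : ℕ → S N) => p n = ((0 : ℤ), j)) l.length (pos ((0 : ℤ), i) l)) := by
    rw [eOcc_apply]
    refine T_congr fun l _ => ?_
    show endSt ((0 : ℤ), i) l = ((0 : ℤ), j) ↔ pos ((0 : ℤ), i) l l.length = ((0 : ℤ), j)
    rw [pos_endSt]
  rw [hev, ← T_fiber' ((0 : ℤ), i) (fun n (p : ℕ → S N) => p n = ((0 : ℤ), j))]
  have heq : ∀ n : ℕ, eprob A ((0 : ℤ), i) n (fun p => p n = ((0 : ℤ), j))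
      = ENNReal.ofReal (prob A ((0 : ℤ), i) n (fun p => p n = ((0 : ℤ), j))) := by
    intro n
    rw [prob_eq_eprob hA]
    exact (ENNReal.ofReal_toReal (eprob_ne_top' hA hsum hsub ((0 : ℤ), i) n _)).symm
  rw [tsum_congr heq,
    ← ENNReal.ofReal_tsum_of_nonneg (fun n => prob_nonneg hA _ _ _) (hL i j)]
  exact ENNReal.ofReal_ne_top

variable (N) in
/-- entrywise `toReal` -/
def rmap (X : Matrix (Fin N) (Fin N) ℝ≥0∞) : Matrix (Fin N) (Fin N) ℝ :=
  X.map ENNReal.toReal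

lemma rmap_apply (X : Matrix (Fin N) (Fin N) ℝ≥0∞) (i j : Fin N) :
    rmap N X i j = (X i j).toReal := rfl

lemma rmap_add (X Y : Matrix (Fin N) (Fin N) ℝ≥0∞) (hX : ∀ i j, X i j ≠ ∞)
    (hY : ∀ i j, Y i j ≠ ∞) : rmap N (X + Y) = rmap N X + rmap N Y := by
  ext i j
  rw [Matrix.add_apply, rmap_apply, rmap_apply, rmap_apply, Matrix.add_apply,
    ENNReal.toReal_add (hX i j) (hY i j)]

lemma rmap_mul (X Y : Matrix (Fin N) (Fin N) ℝ≥0∞) (hX : ∀ i j, X i j ≠ ∞)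
    (hY : ∀ i j, Y i j ≠ ∞) : rmap N (X * Y) = rmap N X * rmap N Y := by
  ext i j
  rw [rmap_apply, Matrix.mul_apply, Matrix.mul_apply,
    ENNReal.toReal_sum (fun k _ => ENNReal.mul_ne_top (hX i k) (hY k j))]
  exact Finset.sum_congr rfl fun k _ => ENNReal.toReal_mul

lemma rmap_one : rmap N (1 : Matrix (Fin N) (Fin N) ℝ≥0∞) = 1 := by
  ext i j
  rw [rmap_apply, Matrix.one_apply, Matrix.one_apply]
  split_ifs <;> simp

lemma mul_entry_ne_top (X Y : Matrix (Fin N) (Fin N) ℝ≥0∞) (hX : ∀ i j, X i j ≠ ∞)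
    (hY : ∀ i j, Y i j ≠ ∞) : ∀ i j, (X * Y) i j ≠ ∞ := by
  intro i j
  rw [Matrix.mul_apply]
  exact (ENNReal.sum_lt_top.2 fun k _ => lt_top_iff_ne_top.2
    (ENNReal.mul_ne_top (hX i k) (hY k j))).ne

/-! ### bridges between the paper's matrices and the ℝ≥0∞ matrices -/

lemma hitMat_eq_eH (hA : ∀ m i j, 0 ≤ A m i j)
    (hsum : ∀ i, Summable fun q : ℤ × Fin N => A q.1 i q.2)
    (hsub : ∀ i, ∑' q : ℤ × Fin N, A q.1 i q.2 ≤ 1) (x : ℤ) :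
    hitMat A 1 x = rmap N (eH A x) := by
  ext i j
  show (∑' n : ℕ, (1:ℝ) ^ n * prob A ((0 : ℤ), i) n
      fun p => hitsAt x n p ∧ (p n).2 = j) = (eH A x i j).toReal
  have h1 : ∀ n : ℕ, (1:ℝ) ^ n * prob A ((0 : ℤ), i) n
      (fun p => hitsAt x n p ∧ (p n).2 = j)
      = prob A ((0 : ℤ), i) n (fun p => hitsAt x n p ∧ (p n).2 = j) := by
    intro n
    rw [one_pow, one_mul]
  rw [tsum_congr h1, tsum_prob_eq_T hA hsum hsub]
  congr 1
  rw [eH_apply]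
  refine T_congr fun l _ => ?_
  unfold hitsAt hitL
  rw [pos_endSt]
  tauto

lemma Ltilde_eq_eOcc (hA : ∀ m i j, 0 ≤ A m i j)
    (hsum : ∀ i, Summable fun q : ℤ × Fin N => A q.1 i q.2)
    (hsub : ∀ i, ∑' q : ℤ × Fin N, A q.1 i q.2 ≤ 1) :
    Ltilde A = rmap N (eOcc A 0) := by
  ext i j
  show (∑' n : ℕ, (1:ℝ) ^ n * prob A ((0 : ℤ), i) n
      fun p => p n = ((0 : ℤ), j)) = (eOcc A 0 i j).toReal
  have h1 : ∀ n : ℕ, (1:ℝ) ^ n * prob A ((0 : ℤ), i) n (fun p => p n = ((0 : ℤ), j))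
      = prob A ((0 : ℤ), i) n (fun p => p n = ((0 : ℤ), j)) := by
    intro n
    rw [one_pow, one_mul]
  rw [tsum_congr h1, tsum_prob_eq_T hA hsum hsub]
  congr 1
  rw [eOcc_apply]
  refine T_congr fun l _ => ?_
  rw [pos_endSt]

lemma upExit_eq_eUE (hA : ∀ m i j, 0 ≤ A m i j)
    (hsum : ∀ i, Summable fun q : ℤ × Fin N => A q.1 i q.2)
    (hsub : ∀ i, ∑' q : ℤ × Fin N, A q.1 i q.2 ≤ 1)
    (hskip : ∀ m : ℤ, 2 ≤ m → A m = 0) {a b : ℕ} (ha : 1 ≤ a) (hb : 1 ≤ b) :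
    upExitMat A 1 (a : ℤ) (b : ℤ) = rmap N (eUE A a b) := by
  ext i j
  show (∑' n : ℕ, (1:ℝ) ^ n * prob A ((0 : ℤ), i) n
      fun p => (a : ℤ) ≤ (p n).1 ∧ (∀ k < n, -(b : ℤ) < (p k).1 ∧ (p k).1 < a) ∧ (p n).2 = j)
      = (eUE A a b i j).toReal
  have h1 : ∀ n : ℕ, (1:ℝ) ^ n * prob A ((0 : ℤ), i) n
      (fun p => (a : ℤ) ≤ (p n).1 ∧ (∀ k < n, -(b : ℤ) < (p k).1 ∧ (p k).1 < a) ∧ (p n).2 = j)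
      = prob A ((0 : ℤ), i) n
        (fun p => (a : ℤ) ≤ (p n).1 ∧ (∀ k < n, -(b : ℤ) < (p k).1 ∧ (p k).1 < a) ∧ (p n).2 = j) := by
    intro n
    rw [one_pow, one_mul]
  rw [tsum_congr h1, tsum_prob_eq_T hA hsum hsub]
  congr 1
  refine T_congr fun l hw => ?_
  constructor
  · rintro ⟨h1', h2', h3'⟩
    have hne : l ≠ [] := by
      intro hl
      subst hl
      have hz : (pos (((0 : ℤ), i) : S N) ([] : List (S N)) 0).1 = 0 := rfl
      simp only [List.length_nil] at h1'
      rw [hz] at h1'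
      omega
    have hlen : 0 < l.length := List.length_pos_iff.2 hne
    have hinc := incr_le_one hskip hw
    have hend_eq : (pos (((0 : ℤ), i) : S N) l l.length).1 = (a : ℤ) := by
      have hstep := hinc (l.length - 1) (by omega)
      rw [show l.length - 1 + 1 = l.length by omega] at hstep
      rcases Nat.eq_zero_or_pos (l.length - 1) with h0 | h0
      · rw [h0, pos_zero] at hstep
        have hz : (((0 : ℤ), i) : S N).1 = 0 := rfl
        rw [hz] at hstep
        omega
      · have := (h2' (l.length - 1) (by omega)).2
        omega
    refine ⟨hne, ?_, ?_, Or.inl le_rfl⟩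
    · intro k hk0 hk
      have := h2' k hk
      intro hC
      rcases hC with h | h <;> omega
    · have h4 : endSt (((0 : ℤ), i) : S N) l = ((endSt (((0 : ℤ), i) : S N) l).1, (endSt (((0 : ℤ), i) : S N) l).2) := rfl
      rw [h4, ← pos_endSt, hend_eq, show (pos (((0 : ℤ), i) : S N) l l.length).2 = j from h3']
  · rintro ⟨hne, hmid, hend, _⟩
    refine ⟨?_, ?_, ?_⟩
    · rw [pos_endSt, hend]
    · intro k hk
      rcases Nat.eq_zero_or_pos k with hk0 | hk0
      · rw [hk0, pos_zero]
        constructor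
        · show -(b : ℤ) < ((0 : ℤ), i).1
          simp
          omega
        · show (((0 : ℤ), i) : S N).1 < (a : ℤ)
          simp
          omega
      · have := hmid k hk0 hk
        simp only [Cstrip] at this
        push_neg at this
        exact ⟨by omega, by omega⟩
    · rw [pos_endSt, hend]


end ProofInfra

open scoped ENNReal

/-- Two-sided upward exit: W(n) is invertible for n ≥ 1 and
ℙ(τ_a^+ < τ_{-b}^-, J_{τ_a^+}) = W(b) W(a+b)⁻¹ for all a, b ≥ 1. -/
theorem statement9 {N : ℕ} (hN : 0 < N) (A : ℤ → Matrix (Fin N) (Fin N) ℝ)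
    (hA : ∀ m i j, 0 ≤ A m i j)
    (hskip : ∀ m : ℤ, 2 ≤ m → A m = 0)
    (hsum : ∀ i, Summable fun q : ℤ × Fin N => A q.1 i q.2)
    (hsub : ∀ i, ∑' q : ℤ × Fin N, A q.1 i q.2 ≤ 1)
    (hA1 : IsUnit (A 1))
    (hL : ∀ i j : Fin N,
      Summable fun k : ℕ => prob A ((0 : ℤ), i) k fun p => p k = ((0 : ℤ), j)) :
    (∀ n : ℕ, 1 ≤ n → IsUnit (Wmat A n)) ∧
    ∀ a b : ℕ, 1 ≤ a → 1 ≤ b →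
      upExitMat A 1 (a : ℤ) (b : ℤ) = Wmat A b * (Wmat A (a + b))⁻¹ := by
  classical
  -- finiteness facts
  have hHfin : ∀ (x : ℤ) (i j : Fin N), eH A x i j ≠ ∞ :=
    fun x i j => ne_top_of_le_ne_top ENNReal.one_ne_top (eH_le_one hA hsum hsub x i j)
  have hGpowfin : ∀ (n : ℕ) (i j : Fin N), (eH A 1 ^ n) i j ≠ ∞ := by
    intro n i j
    rw [← eH_pow hskip]
    exact hHfin _ i j
  have hLfin : ∀ i j, eOcc A 0 i j ≠ ∞ := eOcc_ne_top hA hsum hsub hL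
  have hone_fin : ∀ i j, (1 : Matrix (Fin N) (Fin N) ℝ≥0∞) i j ≠ ∞ := by
    intro i j
    rw [Matrix.one_apply]
    split_ifs <;> simp
  have hRVfin : ∀ (V : ℤ → Prop) (i j : Fin N), eRV A V i j ≠ ∞ :=
    fun V i j => ne_top_of_le_ne_top ENNReal.one_ne_top (eRV_le_one hA hsum hsub V i j)
  -- real matrix bridges
  have hGmat : Gmat A = rmap N (eH A 1) := hitMat_eq_eH hA hsum hsub 1
  have hHr : ∀ x : ℤ, hitMat A 1 x = rmap N (eH A x) := hitMat_eq_eH hA hsum hsub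
  have hLr : Ltilde A = rmap N (eOcc A 0) := Ltilde_eq_eOcc hA hsum hsub
  have rmap_powG : ∀ n : ℕ, rmap N (eH A 1 ^ n) = Gmat A ^ n := by
    intro n
    induction n with
    | zero => rw [pow_zero, pow_zero, rmap_one]
    | succ n ih =>
        rw [pow_succ, pow_succ, rmap_mul _ _ (hGpowfin n) (hHfin 1), ih, hGmat]
  have hGn : ∀ n : ℕ, hitMat A 1 (n : ℤ) = Gmat A ^ n := by
    intro n
    rw [hHr, eH_pow hskip, rmap_powG]
  -- L is a unit
  have hLV_False : eLV A (fun _ => False) = eOcc A 0 := by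
    ext i j
    refine T_congr fun l _ => ?_
    constructor
    · rintro ⟨h, _⟩
      exact h
    · intro h
      exact ⟨h, fun _ _ => not_false⟩
  have hLid : Ltilde A = 1 + rmap N (eRV A (fun _ => False)) * Ltilde A := by
    have h1 : eOcc A 0 = 1 + eRV A (fun _ => False) * eOcc A 0 := by
      have h := eLV_eq (A := A) (fun _ => False) not_false
      rwa [hLV_False] at h
    calc Ltilde A = rmap N (eOcc A 0) := hLr
      _ = rmap N (1 + eRV A (fun _ => False) * eOcc A 0) := by rw [← h1]
      _ = 1 + rmap N (eRV A (fun _ => False)) * rmap N (eOcc A 0) := by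
          rw [rmap_add _ _ hone_fin (mul_entry_ne_top _ _ (hRVfin _) hLfin), rmap_one,
            rmap_mul _ _ (hRVfin _) hLfin]
      _ = 1 + rmap N (eRV A (fun _ => False)) * Ltilde A := by rw [← hLr]
  have hLunit : IsUnit (Ltilde A) := by
    have h2 : (1 - rmap N (eRV A (fun _ => False))) * Ltilde A = 1 := by
      rw [sub_mul, one_mul]
      nth_rewrite 1 [hLid]
      rw [add_sub_cancel_right]
    rw [Matrix.isUnit_iff_isUnit_det]
    have h3 := congrArg Matrix.det h2
    rw [Matrix.det_mul, Matrix.det_one] at h3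
    exact IsUnit.of_mul_eq_one _ (by rw [mul_comm]; exact h3)
  -- G is a unit
  have hBfin : ∀ i j, eB A i j ≠ ∞ :=
    fun i j => ne_top_of_le_ne_top ENNReal.one_ne_top (eB_le_one hA hsum hsub i j)
  have hA1fin : ∀ i j, eA1 A i j ≠ ∞ := fun i j => ENNReal.ofReal_ne_top
  have hA1map : rmap N (eA1 A) = A 1 := by
    ext i j
    rw [rmap_apply]
    exact ENNReal.toReal_ofReal (hA 1 i j)
  have hGid : Gmat A = A 1 + rmap N (eB A) * Gmat A := by
    calc Gmat A = rmap N (eH A 1) := hGmat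
      _ = rmap N (eA1 A + eB A * eH A 1) := by rw [← eG_eq hskip]
      _ = A 1 + rmap N (eB A) * rmap N (eH A 1) := by
          rw [rmap_add _ _ hA1fin (mul_entry_ne_top _ _ hBfin (hHfin 1)), hA1map,
            rmap_mul _ _ hBfin (hHfin 1)]
      _ = A 1 + rmap N (eB A) * Gmat A := by rw [← hGmat]
  have hGunit : IsUnit (Gmat A) := by
    have h2 : (1 - rmap N (eB A)) * Gmat A = A 1 := by
      rw [sub_mul, one_mul]
      nth_rewrite 1 [hGid]
      rw [add_sub_cancel_right]
    rw [Matrix.isUnit_iff_isUnit_det]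
    have h3 := congrArg Matrix.det h2
    rw [Matrix.det_mul] at h3
    have h4 : IsUnit ((A 1).det) := (Matrix.isUnit_iff_isUnit_det _).1 hA1
    rw [← h3] at h4
    exact isUnit_of_mul_isUnit_right h4
  -- invertibility of 1 - G^n H(-n)
  have hWkey : ∀ n : ℕ, 1 ≤ n → IsUnit (1 - Gmat A ^ n * hitMat A 1 (-(n : ℤ))) := by
    intro n hn
    have hLnfin : ∀ i j, eLV A (fun y => y = (n : ℤ)) i j ≠ ∞ := by
      intro i j
      refine ne_top_of_le_ne_top (hLfin i j) ?_
      rw [← hLV_False]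
      exact T_mono fun l hl => ⟨hl.1, fun _ _ => not_false⟩
    have hLnid := eLV_eq (A := A) (fun y => y = (n : ℤ)) (by omega)
    have hLnid' : rmap N (eLV A (fun y => y = (n : ℤ)))
        = 1 + rmap N (eRV A (fun y => y = (n : ℤ))) * rmap N (eLV A (fun y => y = (n : ℤ))) := by
      calc rmap N (eLV A (fun y => y = (n : ℤ)))
          = rmap N (1 + eRV A (fun y => y = (n : ℤ)) * eLV A (fun y => y = (n : ℤ))) := by
            rw [← hLnid]
        _ = _ := by
            rw [rmap_add _ _ hone_fin (mul_entry_ne_top _ _ (hRVfin _) hLnfin), rmap_one,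
              rmap_mul _ _ (hRVfin _) hLnfin]
    have hLnunit : IsUnit (rmap N (eLV A (fun y => y = (n : ℤ)))) := by
      have h2 : (1 - rmap N (eRV A (fun y => y = (n : ℤ))))
          * rmap N (eLV A (fun y => y = (n : ℤ))) = 1 := by
        rw [sub_mul, one_mul]
        nth_rewrite 1 [hLnid']
        rw [add_sub_cancel_right]
      rw [Matrix.isUnit_iff_isUnit_det]
      have h3 := congrArg Matrix.det h2
      rw [Matrix.det_mul, Matrix.det_one] at h3
      exact IsUnit.of_mul_eq_one _ (by rw [mul_comm]; exact h3)
    have hsplit := eOcc_split (A := A) n hn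
    have hocc := eOcc_eq (A := A) (-(n : ℤ)) (by omega)
    rw [hocc] at hsplit
    have hfin2 : ∀ i j, (eH A (-(n : ℤ)) * eOcc A 0) i j ≠ ∞ :=
      mul_entry_ne_top _ _ (hHfin _) hLfin
    have h6 : Ltilde A = rmap N (eLV A (fun y => y = (n : ℤ)))
        + Gmat A ^ n * (hitMat A 1 (-(n : ℤ)) * Ltilde A) := by
      calc Ltilde A = rmap N (eOcc A 0) := hLr
        _ = rmap N (eLV A (fun y => y = (n : ℤ))
              + eH A (n : ℤ) * (eH A (-(n : ℤ)) * eOcc A 0)) := by rw [← hsplit]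
        _ = rmap N (eLV A (fun y => y = (n : ℤ)))
              + rmap N (eH A (n : ℤ)) * (rmap N (eH A (-(n : ℤ))) * rmap N (eOcc A 0)) := by
            rw [rmap_add _ _ hLnfin (mul_entry_ne_top _ _ (hHfin _) hfin2),
              rmap_mul _ _ (hHfin _) hfin2, rmap_mul _ _ (hHfin _) hLfin]
        _ = _ := by
            rw [eH_pow hskip, rmap_powG, ← hHr, ← hLr]
    have h7 : (1 - Gmat A ^ n * hitMat A 1 (-(n : ℤ))) * Ltilde A
        = rmap N (eLV A (fun y => y = (n : ℤ))) := by
      rw [sub_mul, one_mul, mul_assoc]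
      nth_rewrite 1 [h6]
      rw [add_sub_cancel_right]
    rw [Matrix.isUnit_iff_isUnit_det]
    have h8 := congrArg Matrix.det h7
    rw [Matrix.det_mul] at h8
    have h9 := (Matrix.isUnit_iff_isUnit_det _).1 hLnunit
    rw [← h8] at h9
    exact isUnit_of_mul_isUnit_left h9
  have hGdet : IsUnit (Gmat A).det := (Matrix.isUnit_iff_isUnit_det _).1 hGunit
  have hGinv : (Gmat A)⁻¹ * Gmat A = 1 := Matrix.nonsing_inv_mul _ hGdet
  have hGinvunit : IsUnit ((Gmat A)⁻¹) := by
    rw [Matrix.isUnit_iff_isUnit_det]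
    have h3 := congrArg Matrix.det hGinv
    rw [Matrix.det_mul, Matrix.det_one] at h3
    exact IsUnit.of_mul_eq_one _ h3
  have hpowinv : ∀ n : ℕ, ((Gmat A)⁻¹) ^ n * (Gmat A) ^ n = 1 := by
    intro n
    induction n with
    | zero => simp
    | succ n ih =>
        rw [pow_succ, pow_succ']
        calc (Gmat A)⁻¹ ^ n * (Gmat A)⁻¹ * (Gmat A * Gmat A ^ n)
            = (Gmat A)⁻¹ ^ n * ((Gmat A)⁻¹ * Gmat A) * Gmat A ^ n := by
              rw [mul_assoc, mul_assoc, mul_assoc]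
          _ = 1 := by rw [hGinv, mul_one, ih]
  have hWfact : ∀ n : ℕ, Wmat A n
      = ((Gmat A)⁻¹ ^ n) * ((1 - Gmat A ^ n * hitMat A 1 (-(n : ℤ))) * Ltilde A) := by
    intro n
    show ((Gmat A)⁻¹ ^ n - hitMat A 1 (-(n : ℤ))) * Ltilde A = _
    rw [← mul_assoc]
    congr 1
    rw [mul_sub, mul_one, ← mul_assoc, hpowinv n, one_mul]
  have hWunit : ∀ n : ℕ, 1 ≤ n → IsUnit (Wmat A n) := by
    intro n hn
    rw [hWfact n]
    exact (hGinvunit.pow n).mul ((hWkey n hn).mul hLunit)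
  refine ⟨hWunit, ?_⟩
  intro a b ha hb
  -- finiteness for Dhat and U
  have hDfin : ∀ i j, eDhat A a b i j ≠ ∞ := by
    intro i j
    have h1 := eH_bot_eq (A := A) hskip ha hb
    have h3 : eH A (-(b : ℤ)) i j
        = (eUE A a b * eH A (-((a : ℤ) + b))) i j + eDhat A a b i j := by
      rw [h1]
      rfl
    refine ne_top_of_le_ne_top (hHfin (-(b : ℤ)) i j) ?_
    rw [h3]
    exact le_add_self
  have hUfin : ∀ i j, eUE A a b i j ≠ ∞ :=
    fun i j => ne_top_of_le_ne_top ENNReal.one_ne_top (eFE_le_one hA hsum hsub _ _ _ _)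
  have hUr : upExitMat A 1 (a : ℤ) (b : ℤ) = rmap N (eUE A a b) :=
    upExit_eq_eUE hA hsum hsub hskip ha hb
  -- the two one-sided identities over ℝ
  have hp2 : Gmat A ^ a = upExitMat A 1 (a : ℤ) (b : ℤ)
      + rmap N (eDhat A a b) * Gmat A ^ (a + b) := by
    have e1 : rmap N (eH A (a : ℤ)) = Gmat A ^ a := by rw [← hHr, hGn]
    calc Gmat A ^ a = rmap N (eH A (a : ℤ)) := e1.symm
      _ = rmap N (eUE A a b + eDhat A a b * eH A 1 ^ (a + b)) := by
          rw [← eH_top_eq hskip ha hb]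
      _ = rmap N (eUE A a b) + rmap N (eDhat A a b) * rmap N (eH A 1 ^ (a + b)) := by
          rw [rmap_add _ _ hUfin (mul_entry_ne_top _ _ hDfin (hGpowfin _)),
            rmap_mul _ _ hDfin (hGpowfin _)]
      _ = _ := by rw [rmap_powG, ← hUr]
  have hp3 : hitMat A 1 (-(b : ℤ)) = upExitMat A 1 (a : ℤ) (b : ℤ)
      * hitMat A 1 (-((a : ℤ) + b)) + rmap N (eDhat A a b) := by
    calc hitMat A 1 (-(b : ℤ)) = rmap N (eH A (-(b : ℤ))) := hHr _
      _ = rmap N (eUE A a b * eH A (-((a : ℤ) + b)) + eDhat A a b) := by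
          rw [← eH_bot_eq hskip ha hb]
      _ = rmap N (eUE A a b) * rmap N (eH A (-((a : ℤ) + b))) + rmap N (eDhat A a b) := by
          rw [rmap_add _ _ (mul_entry_ne_top _ _ hUfin (hHfin _)) hDfin,
            rmap_mul _ _ hUfin (hHfin _)]
      _ = _ := by rw [← hUr, ← hHr]
  -- cancellation of G^(a+b)
  have hGabdet : IsUnit ((Gmat A ^ (a + b)).det) :=
    (Matrix.isUnit_iff_isUnit_det _).1 (hGunit.pow _)
  have hcancel : ∀ X Y : Matrix (Fin N) (Fin N) ℝ,
      X * Gmat A ^ (a + b) = Y * Gmat A ^ (a + b) → X = Y := by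
    intro X Y h
    calc X = X * (Gmat A ^ (a + b) * (Gmat A ^ (a + b))⁻¹) := by
          rw [Matrix.mul_nonsing_inv _ hGabdet, mul_one]
      _ = Y * (Gmat A ^ (a + b) * (Gmat A ^ (a + b))⁻¹) := by
          rw [← mul_assoc, h, mul_assoc]
      _ = Y := by rw [Matrix.mul_nonsing_inv _ hGabdet, mul_one]
  have hcore : upExitMat A 1 (a : ℤ) (b : ℤ)
      * ((Gmat A)⁻¹ ^ (a + b) - hitMat A 1 (-((a : ℤ) + b)))
      = (Gmat A)⁻¹ ^ b - hitMat A 1 (-(b : ℤ)) := by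
    apply hcancel
    have hGb : (Gmat A)⁻¹ ^ b * Gmat A ^ (a + b) = Gmat A ^ a := by
      have hab : Gmat A ^ (a + b) = Gmat A ^ b * Gmat A ^ a := by
        rw [← pow_add]
        congr 1
        omega
      rw [hab, ← mul_assoc, hpowinv b, one_mul]
    calc upExitMat A 1 (a : ℤ) (b : ℤ)
          * ((Gmat A)⁻¹ ^ (a + b) - hitMat A 1 (-((a : ℤ) + b))) * Gmat A ^ (a + b)
        = upExitMat A 1 (a : ℤ) (b : ℤ)
            * (((Gmat A)⁻¹ ^ (a + b) - hitMat A 1 (-((a : ℤ) + b))) * Gmat A ^ (a + b)) := by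
          rw [mul_assoc]
      _ = upExitMat A 1 (a : ℤ) (b : ℤ)
            * (1 - hitMat A 1 (-((a : ℤ) + b)) * Gmat A ^ (a + b)) := by
          rw [sub_mul, hpowinv (a + b)]
      _ = ((Gmat A)⁻¹ ^ b - hitMat A 1 (-(b : ℤ))) * Gmat A ^ (a + b) := by
          rw [sub_mul, hGb, hp2, hp3]
          noncomm_ring
  have hWab : IsUnit (Wmat A (a + b)) := hWunit (a + b) (by omega)
  have hcast : (-(((a + b : ℕ)) : ℤ)) = -((a : ℤ) + b) := by push_cast; ring
  have hWmul : upExitMat A 1 (a : ℤ) (b : ℤ) * Wmat A (a + b) = Wmat A b := by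
    show upExitMat A 1 (a : ℤ) (b : ℤ)
        * (((Gmat A)⁻¹ ^ (a + b) - hitMat A 1 (-((a + b : ℕ) : ℤ))) * Ltilde A)
      = ((Gmat A)⁻¹ ^ b - hitMat A 1 (-(b : ℤ))) * Ltilde A
    rw [hcast, ← mul_assoc, hcore]
  have hWinv : Wmat A (a + b) * (Wmat A (a + b))⁻¹ = 1 :=
    Matrix.mul_nonsing_inv _ ((Matrix.isUnit_iff_isUnit_det _).1 hWab)
  calc upExitMat A 1 (a : ℤ) (b : ℤ)
      = upExitMat A 1 (a : ℤ) (b : ℤ) * 1 := (mul_one _).symm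
    _ = upExitMat A 1 (a : ℤ) (b : ℤ) * (Wmat A (a + b) * (Wmat A (a + b))⁻¹) := by
        rw [hWinv]
    _ = (upExitMat A 1 (a : ℤ) (b : ℤ) * Wmat A (a + b)) * (Wmat A (a + b))⁻¹ := by
        rw [mul_assoc]
    _ = Wmat A b * (Wmat A (a + b))⁻¹ := by rw [hWmul]

end MACPaper

end
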